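/- arXiv:2512.07592 — 5 statements merged into one kernel-verified Lean document; each statement's English description precedes it below -/
import Mathlib

section
/- Let G=(V,E) be a finite simple connected chordal graph. Then every maximal utter clique [W,F] of G satisfies F = E(W) ∪ δ(W); in particular no edge of F has both endpoints outside W. -/
open Finset
open scoped Classical

noncomputable section

variable {V : Type*} [Fintype V]

/-- A co-2-plex: a set of vertices inducing a subgraph of maximum degree at most 1. -/
def IsCo2Plex {α : Type*} (G : SimpleGraph α) (S : Finset α) : Prop :=
  ∀ u ∈ S, (S.filter fun v => G.Adj u v).card ≤ 1

/-- Incidence vector of a vertex set. -/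
def chiV {α : Type*} (S : Finset α) : α → ℝ := fun v => if v ∈ S then 1 else 0

/-- Incidence vector (on edges) of the set of edges with both endpoints in `S`. -/
def chiE {α : Type*} (G : SimpleGraph α) (S : Finset α) : G.edgeSet → ℝ :=
  fun e => if ∀ v ∈ (e : Sym2 α), v ∈ S then 1 else 0

/-- The co-2-plex polytope. -/
def co2PlexPolytope (G : SimpleGraph V) : Set (V → ℝ) :=
  convexHull ℝ {x | ∃ S : Finset V, IsCo2Plex G S ∧ x = chiV S}

/-- The extended co-2-plex polytope. -/
def co2PlexPolytopeExt (G : SimpleGraph V) : Set ((V → ℝ) × (G.edgeSet → ℝ)) :=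
  convexHull ℝ {p | ∃ S : Finset V, IsCo2Plex G S ∧ p = (chiV S, chiE G S)}

/-- δ(v): edges incident to `v`. -/
def inc (G : SimpleGraph V) (v : V) : Finset G.edgeSet :=
  univ.filter fun e => v ∈ (e : Sym2 V)

/-- E(W): edges with both endpoints in W. -/
def edgesIn (G : SimpleGraph V) (W : Finset V) : Finset G.edgeSet :=
  univ.filter fun e => ∀ v ∈ (e : Sym2 V), v ∈ W

/-- E(V \ W): edges with both endpoints outside W. -/
def edgesOut (G : SimpleGraph V) (W : Finset V) : Finset G.edgeSet :=
  univ.filter fun e => ∀ v ∈ (e : Sym2 V), v ∉ W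

/-- δ(W): edges with exactly one endpoint in W. -/
def edgesCut (G : SimpleGraph V) (W : Finset V) : Finset G.edgeSet :=
  univ.filter fun e => (∃ v ∈ (e : Sym2 V), v ∈ W) ∧ ∃ v ∈ (e : Sym2 V), v ∉ W

/-- The utter graph of `G`. -/
def utter (G : SimpleGraph V) : SimpleGraph (V ⊕ G.edgeSet) where
  Adj a b :=
    match a, b with
    | Sum.inl u, Sum.inl v => G.Adj u v
    | Sum.inl w, Sum.inr e => w ∈ (e : Sym2 V) ∨ ∃ z ∈ (e : Sym2 V), G.Adj w z
    | Sum.inr e, Sum.inl w => w ∈ (e : Sym2 V) ∨ ∃ z ∈ (e : Sym2 V), G.Adj w z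
    | Sum.inr e, Sum.inr f =>
        e ≠ f ∧ ((∃ v, v ∈ (e : Sym2 V) ∧ v ∈ (f : Sym2 V)) ∨
          ∃ a ∈ (e : Sym2 V), ∃ b ∈ (f : Sym2 V), G.Adj a b)
  symm := by
    constructor
    rintro (u | e) (v | f) h
    · exact h.symm
    · exact h
    · exact h
    · obtain ⟨hne, h⟩ := h
      refine ⟨hne.symm, ?_⟩
      rcases h with ⟨v, hv1, hv2⟩ | ⟨a, ha, b, hb, hab⟩
      · exact Or.inl ⟨v, hv2, hv1⟩
      · exact Or.inr ⟨b, hb, a, ha, hab.symm⟩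
  loopless := by
    constructor
    rintro (u | e) h
    · exact G.loopless.irrefl u h
    · exact h.1 rfl

/-- An utter clique: a pair [W, F] whose union is a clique of the utter graph. -/
def IsUtterClique (G : SimpleGraph V) (W : Finset V) (F : Finset G.edgeSet) : Prop :=
  (utter G).IsClique (Sum.inl '' (W : Set V) ∪ Sum.inr '' (F : Set G.edgeSet))

/-- A maximal utter clique. -/
def IsMaxUtterClique (G : SimpleGraph V) (W : Finset V) (F : Finset G.edgeSet) : Prop :=
  IsUtterClique G W F ∧
    (∀ v ∉ W, ¬ IsUtterClique G (insert v W) F) ∧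
    (∀ e ∉ F, ¬ IsUtterClique G W (insert e F))

/-- The contraction G/F: vertices are the connected components of the spanning
subgraph (V, F); two components are adjacent iff some edge of `G` joins them. -/
def contract {α : Type*} (G : SimpleGraph α) (F : Set (Sym2 α)) :
    SimpleGraph (SimpleGraph.fromEdgeSet F).ConnectedComponent where
  Adj c d := c ≠ d ∧ ∃ u v, G.Adj u v ∧
      (SimpleGraph.fromEdgeSet F).connectedComponentMk u = c ∧
      (SimpleGraph.fromEdgeSet F).connectedComponentMk v = d
  symm := by
    constructor
    rintro c d ⟨hne, u, v, h, hu, hv⟩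
    exact ⟨hne.symm, v, u, h.symm, hv, hu⟩
  loopless := by
    constructor
    rintro c ⟨hne, _⟩
    exact hne rfl

/-- A graph is perfect if every induced subgraph has chromatic number equal to
its clique number. -/
def IsPerfect {α : Type*} (G : SimpleGraph α) : Prop :=
  ∀ s : Set α, (G.induce s).chromaticNumber = ((G.induce s).cliqueNum : ℕ∞)

/-- A graph is contraction perfect if all its contractions (by edge subsets) are perfect. -/
def ContractionPerfect (G : SimpleGraph V) : Prop :=
  ∀ F : Set (Sym2 V), F ⊆ G.edgeSet → IsPerfect (contract G F)

/-- Chordal: no induced cycle of length at least 4. -/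
def Chordal (G : SimpleGraph V) : Prop :=
  ∀ n, 4 ≤ n → IsEmpty (SimpleGraph.cycleGraph n ↪g G)

/-- Maximal clique (as a finset). -/
def IsMaxCliqueF (G : SimpleGraph V) (K : Finset V) : Prop :=
  G.IsClique (K : Set V) ∧ ∀ K' : Finset V, G.IsClique (K' : Set V) → K ⊆ K' → K = K'

/-- A 2-plex: every vertex of the induced subgraph has degree at least |K| - 2 in it. -/
def Is2Plex (G : SimpleGraph V) (K : Finset V) : Prop :=
  ∀ v ∈ K, K.card - 2 ≤ (K.filter fun u => G.Adj v u).card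

/-- α₂(G[W]): the maximum cardinality of a co-2-plex contained in `W`. -/
def co2plexNumOn (G : SimpleGraph V) (W : Finset V) : ℕ :=
  Finset.univ.sup fun S : Finset V => if S ⊆ W ∧ IsCo2Plex G S then S.card else 0

/-- Facet-defining inequality of a full-dimensional polytope in ℝ^α: a valid
inequality whose tight points contain `card α` affinely independent points. -/
def IsFacet {α : Type*} [Fintype α] (P : Set (α → ℝ)) (a : α → ℝ) (c : ℝ) : Prop :=
  (∀ x ∈ P, ∑ v, a v * x v ≤ c) ∧
  ∃ f : Fin (Fintype.card α) → (α → ℝ),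
    AffineIndependent ℝ f ∧ ∀ i, f i ∈ P ∧ ∑ v, a v * f i v = c

/-- The polytope T(G) given by bounds and the star inequalities. -/
def TPoly (G : SimpleGraph V) [DecidableRel G.Adj] : Set (V → ℝ) :=
  {x | (∀ v, 0 ≤ x v ∧ x v ≤ 1) ∧
    ∀ (w : V), ∀ W ⊆ G.neighborFinset w,
      ∑ v ∈ W, x v + ((W.card : ℝ) - 1) * x w ≤ (W.card : ℝ)}

/-- Total dual integrality of the system `A x ≤ b`. -/
def IsTDI {ι κ : Type*} [Fintype ι] [Fintype κ] (A : ι → κ → ℝ) (b : ι → ℝ) : Prop :=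
  ∀ c : κ → ℤ, ∀ m : ℝ,
    IsGreatest {t | ∃ x : κ → ℝ, (∀ i, ∑ j, A i j * x j ≤ b i) ∧ t = ∑ j, (c j : ℝ) * x j} m →
    ∃ π : ι → ℤ, (∀ i, 0 ≤ π i) ∧ (∀ j, ∑ i, (π i : ℝ) * A i j = (c j : ℝ)) ∧
      ∑ i, (π i : ℝ) * b i = m



section StmtFourHelpers

set_option maxRecDepth 10000
set_option linter.unusedSectionVars false

variable {G : SimpleGraph V}

private lemma noC4 (hch : Chordal G) {a b c d : V}
    (hac : a ≠ c) (hbd : b ≠ d)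
    (e1 : G.Adj a b) (e2 : G.Adj b c) (e3 : G.Adj c d) (e4 : G.Adj d a)
    (n1 : ¬ G.Adj a c) (n2 : ¬ G.Adj b d) : False := by
  have e1' := e1.symm; have e2' := e2.symm; have e3' := e3.symm; have e4' := e4.symm
  have n1' : ¬ G.Adj c a := fun h => n1 h.symm
  have n2' : ¬ G.Adj d b := fun h => n2 h.symm
  refine (hch 4 le_rfl).false (⟨⟨![a,b,c,d], ?_⟩, ?_⟩)
  · intro i j hij
    fin_cases i <;> fin_cases j <;>
      simp_all [e1.ne, e1.ne', e2.ne, e2.ne', e3.ne, e3.ne', e4.ne, e4.ne']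
  · intro i j
    change G.Adj ((![a,b,c,d] : Fin 4 → V) i) ((![a,b,c,d] : Fin 4 → V) j) ↔ _
    fin_cases i <;> fin_cases j <;>
      simp (config := { decide := true }) [SimpleGraph.cycleGraph_adj, e1, e2, e3, e4,
        e1', e2', e3', e4', n1, n2, n1', n2', G.loopless]

private lemma noC5 (hch : Chordal G) {a b c d e : V}
    (hac : a ≠ c) (had : a ≠ d) (hbd : b ≠ d) (hbe : b ≠ e) (hce : c ≠ e)
    (e1 : G.Adj a b) (e2 : G.Adj b c) (e3 : G.Adj c d) (e4 : G.Adj d e) (e5 : G.Adj e a)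
    (n1 : ¬ G.Adj a c) (n2 : ¬ G.Adj a d) (n3 : ¬ G.Adj b d) (n4 : ¬ G.Adj b e)
    (n5 : ¬ G.Adj c e) : False := by
  have e1' := e1.symm; have e2' := e2.symm; have e3' := e3.symm; have e4' := e4.symm
  have e5' := e5.symm
  have n1' : ¬ G.Adj c a := fun h => n1 h.symm
  have n2' : ¬ G.Adj d a := fun h => n2 h.symm
  have n3' : ¬ G.Adj d b := fun h => n3 h.symm
  have n4' : ¬ G.Adj e b := fun h => n4 h.symm
  have n5' : ¬ G.Adj e c := fun h => n5 h.symm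
  refine (hch 5 (by norm_num)).false (⟨⟨![a,b,c,d,e], ?_⟩, ?_⟩)
  · intro i j hij
    fin_cases i <;> fin_cases j <;>
      simp_all [e1.ne, e1.ne', e2.ne, e2.ne', e3.ne, e3.ne', e4.ne, e4.ne', e5.ne, e5.ne']
  · intro i j
    change G.Adj ((![a,b,c,d,e] : Fin 5 → V) i) ((![a,b,c,d,e] : Fin 5 → V) j) ↔ _
    fin_cases i <;> fin_cases j <;>
      simp (config := { decide := true }) [SimpleGraph.cycleGraph_adj, e1, e2, e3, e4, e5,
        e1', e2', e3', e4', e5', n1, n2, n3, n4, n5, n1', n2', n3', n4', n5', G.loopless]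

private lemma noC6 (hch : Chordal G) {a b c d e f : V}
    (hac : a ≠ c) (had : a ≠ d) (hae : a ≠ e) (hbd : b ≠ d) (hbe : b ≠ e) (hbf : b ≠ f)
    (hce : c ≠ e) (hcf : c ≠ f) (hdf : d ≠ f)
    (e1 : G.Adj a b) (e2 : G.Adj b c) (e3 : G.Adj c d) (e4 : G.Adj d e) (e5 : G.Adj e f)
    (e6 : G.Adj f a)
    (n1 : ¬ G.Adj a c) (n2 : ¬ G.Adj a d) (n3 : ¬ G.Adj a e) (n4 : ¬ G.Adj b d)
    (n5 : ¬ G.Adj b e) (n6 : ¬ G.Adj b f) (n7 : ¬ G.Adj c e) (n8 : ¬ G.Adj c f)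
    (n9 : ¬ G.Adj d f) : False := by
  have e1' := e1.symm; have e2' := e2.symm; have e3' := e3.symm; have e4' := e4.symm
  have e5' := e5.symm; have e6' := e6.symm
  have n1' : ¬ G.Adj c a := fun h => n1 h.symm
  have n2' : ¬ G.Adj d a := fun h => n2 h.symm
  have n3' : ¬ G.Adj e a := fun h => n3 h.symm
  have n4' : ¬ G.Adj d b := fun h => n4 h.symm
  have n5' : ¬ G.Adj e b := fun h => n5 h.symm
  have n6' : ¬ G.Adj f b := fun h => n6 h.symm
  have n7' : ¬ G.Adj e c := fun h => n7 h.symm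
  have n8' : ¬ G.Adj f c := fun h => n8 h.symm
  have n9' : ¬ G.Adj f d := fun h => n9 h.symm
  refine (hch 6 (by norm_num)).false (⟨⟨![a,b,c,d,e,f], ?_⟩, ?_⟩)
  · intro i j hij
    fin_cases i <;> fin_cases j <;>
      simp only [Matrix.cons_val_zero, Matrix.cons_val_one, Matrix.head_cons, Fin.mk_zero,
        Fin.mk_one, Matrix.cons_val_succ, Fin.isValue] at hij ⊢ <;>
      first
        | rfl
        | exact absurd hij e1.ne | exact absurd hij e1.ne' | exact absurd hij e2.ne
        | exact absurd hij e2.ne' | exact absurd hij e3.ne | exact absurd hij e3.ne'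
        | exact absurd hij e4.ne | exact absurd hij e4.ne' | exact absurd hij e5.ne
        | exact absurd hij e5.ne' | exact absurd hij e6.ne | exact absurd hij e6.ne'
        | exact absurd hij hac | exact absurd hij hac.symm
        | exact absurd hij had | exact absurd hij had.symm
        | exact absurd hij hae | exact absurd hij hae.symm
        | exact absurd hij hbd | exact absurd hij hbd.symm
        | exact absurd hij hbe | exact absurd hij hbe.symm
        | exact absurd hij hbf | exact absurd hij hbf.symm
        | exact absurd hij hce | exact absurd hij hce.symm
        | exact absurd hij hcf | exact absurd hij hcf.symm
        | exact absurd hij hdf | exact absurd hij hdf.symm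
  · have h5 : (![a,b,c,d,e,f] : Fin 6 → V) 5 = f := rfl
    intro i j
    change G.Adj ((![a,b,c,d,e,f] : Fin 6 → V) i) ((![a,b,c,d,e,f] : Fin 6 → V) j) ↔ _
    fin_cases i <;> fin_cases j <;>
      simp (config := { decide := true }) [h5, SimpleGraph.cycleGraph_adj, e1, e2, e3, e4, e5, e6,
        e1', e2', e3', e4', e5', e6', n1, n2, n3, n4, n5, n6, n7, n8, n9,
        n1', n2', n3', n4', n5', n6', n7', n8', n9', G.loopless]

private lemma cross_ww (hch : Chordal G) {u v w1 w2 : V}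
    (huv : G.Adj u v) (h1 : G.Adj u w1) (h2 : ¬ G.Adj v w1) (h3 : G.Adj v w2)
    (h4 : ¬ G.Adj u w2) (h12 : G.Adj w1 w2) (hu2 : u ≠ w2) (hv1 : v ≠ w1) : False :=
  noC4 hch hu2 hv1.symm h1 h12 h3.symm huv.symm h4 (fun hh => h2 hh.symm)

private lemma cross_wf (hch : Chordal G) {u v w p p' : V}
    (huv : G.Adj u v) (hwu : G.Adj u w) (hwv : ¬ G.Adj v w) (hvw : v ≠ w)
    (hpp' : G.Adj p p') (hvp : G.Adj v p) (hup : ¬ G.Adj u p) (hup' : ¬ G.Adj u p')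
    (hunep : u ≠ p) (hunep' : u ≠ p') (hvnep' : v ≠ p')
    (hcon : G.Adj w p ∨ G.Adj w p') : False := by
  have hwv' : ¬ G.Adj w v := fun hh => hwv hh.symm
  by_cases hwp : G.Adj w p
  · exact noC4 hch hunep hvw.symm hwu hwp hvp.symm huv.symm hup hwv'
  have hwp' : G.Adj w p' := hcon.resolve_left hwp
  by_cases hvp' : G.Adj v p'
  · exact noC4 hch hunep' hvw.symm hwu hwp' hvp'.symm huv.symm hup' hwv'
  · have hwnep : w ≠ p := fun hh => hup (hh ▸ hwu)
    exact noC5 hch hunep' hunep hwnep hvw.symm hvnep'.symm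
      hwu hwp' hpp'.symm hvp.symm huv.symm
      hup' hup hwp hwv' (fun hh => hvp' hh.symm)

private lemma cross_shared (hch : Chordal G) {u v x z p : V}
    (huv : G.Adj u v) (hux : G.Adj u x) (hvx : ¬ G.Adj v x)
    (hxz : G.Adj x z) (huz : ¬ G.Adj u z) (hvz : ¬ G.Adj v z)
    (hzp : G.Adj z p) (hvp : G.Adj v p) (hup : ¬ G.Adj u p)
    (hunez : u ≠ z) (hunep : u ≠ p) (hvnex : v ≠ x) (hvnez : v ≠ z) : False := by
  have hxnep : x ≠ p := fun hh => hup (hh ▸ hux)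
  have hxv' : ¬ G.Adj x v := fun hh => hvx hh.symm
  by_cases hxp : G.Adj x p
  · exact noC4 hch hunep hvnex.symm hux hxp hvp.symm huv.symm hup hxv'
  · exact noC5 hch hunez hunep hxnep hvnex.symm hvnez.symm
      hux hxz hzp hvp.symm huv.symm huz hup hxp hxv' (fun hh => hvz hh.symm)

private lemma cross_ff (hch : Chordal G) {u v x x' p p' : V}
    (huv : G.Adj u v) (hxx' : G.Adj x x') (hux : G.Adj u x)
    (hvx : ¬ G.Adj v x) (hvx' : ¬ G.Adj v x')
    (hvnex : v ≠ x) (hvnex' : v ≠ x') (hunex' : u ≠ x')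
    (hpp' : G.Adj p p') (hvp : G.Adj v p) (hup : ¬ G.Adj u p) (hup' : ¬ G.Adj u p')
    (hunep : u ≠ p) (hunep' : u ≠ p') (hvnep' : v ≠ p')
    (dxp : x ≠ p) (dxp' : x ≠ p') (dx'p : x' ≠ p) (dx'p' : x' ≠ p')
    (hcon : G.Adj x p ∨ G.Adj x p' ∨ G.Adj x' p ∨ G.Adj x' p') : False := by
  have hxv' : ¬ G.Adj x v := fun hh => hvx hh.symm
  have hx'v' : ¬ G.Adj x' v := fun hh => hvx' hh.symm
  by_cases hxp : G.Adj x p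
  · exact noC4 hch hunep hvnex.symm hux hxp hvp.symm huv.symm hup hxv'
  by_cases hxp' : G.Adj x p'
  · by_cases hvp' : G.Adj v p'
    · exact noC4 hch hunep' hvnex.symm hux hxp' hvp'.symm huv.symm hup' hxv'
    · exact noC5 hch hunep' hunep dxp hvnex.symm hvnep'.symm
        hux hxp' hpp'.symm hvp.symm huv.symm hup' hup hxp hxv' (fun hh => hvp' hh.symm)
  by_cases hux' : G.Adj u x'
  · by_cases hx'p : G.Adj x' p
    · exact noC4 hch hunep hvnex'.symm hux' hx'p hvp.symm huv.symm hup hx'v'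
    by_cases hx'p' : G.Adj x' p'
    · by_cases hvp' : G.Adj v p'
      · exact noC4 hch hunep' hvnex'.symm hux' hx'p' hvp'.symm huv.symm hup' hx'v'
      · exact noC5 hch hunep' hunep dx'p hvnex'.symm hvnep'.symm
          hux' hx'p' hpp'.symm hvp.symm huv.symm hup' hup hx'p hx'v' (fun hh => hvp' hh.symm)
    · rcases hcon with hh | hh | hh | hh
      · exact hxp hh
      · exact hxp' hh
      · exact hx'p hh
      · exact hx'p' hh
  by_cases hx'p : G.Adj x' p
  · exact noC5 hch hunex' hunep dxp hvnex.symm hvnex'.symm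
      hux hxx' hx'p hvp.symm huv.symm hux' hup hxp hxv' hx'v'
  have hx'p' : G.Adj x' p' := by
    rcases hcon with hh | hh | hh | hh
    · exact absurd hh hxp
    · exact absurd hh hxp'
    · exact absurd hh hx'p
    · exact hh
  by_cases hvp' : G.Adj v p'
  · exact noC5 hch hunex' hunep' dxp' hvnex.symm hvnex'.symm
      hux hxx' hx'p' hvp'.symm huv.symm hux' hup' hxp' hxv' hx'v'
  · exact noC6 hch hunex' hunep' hunep dxp' dxp hvnex.symm dx'p hvnex'.symm hvnep'.symm
      hux hxx' hx'p' hpp'.symm hvp.symm huv.symm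
      hux' hup' hup hxp' hxp hxv' hx'p hx'v' (fun hh => hvp' hh.symm)

private lemma sym2_rep (s : Sym2 V) : ∃ a b, s = s(a, b) := by
  induction s using Sym2.ind with
  | _ a b => exact ⟨a, b, rfl⟩

private lemma isUtterClique_iff' (G : SimpleGraph V) (W : Finset V) (F : Finset G.edgeSet) :
    IsUtterClique G W F ↔
      (∀ a ∈ W, ∀ b ∈ W, a ≠ b → G.Adj a b) ∧
      (∀ a ∈ W, ∀ f ∈ F, a ∈ (f : Sym2 V) ∨ ∃ z ∈ (f : Sym2 V), G.Adj a z) ∧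
      (∀ f ∈ F, ∀ g ∈ F, f ≠ g →
        (∃ z, z ∈ (f : Sym2 V) ∧ z ∈ (g : Sym2 V)) ∨
          ∃ a ∈ (f : Sym2 V), ∃ b ∈ (g : Sym2 V), G.Adj a b) := by
  constructor
  · intro hcl
    refine ⟨fun a ha b hb hne => ?_, fun a ha f hf => ?_, fun f hf g hg hne => ?_⟩
    · exact hcl (Or.inl ⟨a, ha, rfl⟩) (Or.inl ⟨b, hb, rfl⟩) (by simpa using hne)
    · exact hcl (Or.inl ⟨a, ha, rfl⟩) (Or.inr ⟨f, hf, rfl⟩) (by simp)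
    · exact (hcl (Or.inr ⟨f, hf, rfl⟩) (Or.inr ⟨g, hg, rfl⟩) (by simpa using hne)).2
  · rintro ⟨h1, h2, h3⟩ a' ha' b' hb' hne
    rcases ha' with ⟨a, ha, rfl⟩ | ⟨f, hf, rfl⟩ <;> rcases hb' with ⟨b, hb, rfl⟩ | ⟨g, hg, rfl⟩
    · exact h1 a ha b hb (fun hh => hne (by rw [hh]))
    · exact h2 a ha g hg
    · exact h2 b hb f hf
    · exact ⟨fun hh => hne (by rw [hh]), h3 f hf g hg (fun hh => hne (by rw [hh]))⟩

private lemma edge_unpack {u v : V} {f : G.edgeSet}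
    (huv : G.Adj u v)
    (hPb : v ∈ (f : Sym2 V) ∨ ∃ z ∈ (f : Sym2 V), G.Adj v z)
    (hPa : ¬ (u ∈ (f : Sym2 V) ∨ ∃ z ∈ (f : Sym2 V), G.Adj u z)) :
    ∃ p p', (f : Sym2 V) = s(p, p') ∧ G.Adj p p' ∧ G.Adj v p ∧
      ¬ G.Adj u p ∧ ¬ G.Adj u p' ∧ u ≠ p ∧ u ≠ p' ∧ v ≠ p ∧ v ≠ p' := by
  push_neg at hPa
  obtain ⟨hu_nmem, hu_nadj⟩ := hPa
  have hv_nmem : v ∉ (f : Sym2 V) := fun hv => hu_nadj v hv huv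
  obtain ⟨z, hzf, hvz⟩ := hPb.resolve_left hv_nmem
  obtain ⟨a, b, hrep⟩ := sym2_rep (f : Sym2 V)
  have hab : G.Adj a b := G.mem_edgeSet.mp (hrep ▸ f.prop)
  have hma : a ∈ (f : Sym2 V) := by rw [hrep]; exact Sym2.mem_mk_left a b
  have hmb : b ∈ (f : Sym2 V) := by rw [hrep]; exact Sym2.mem_mk_right a b
  have hzab : z ∈ s(a, b) := by rw [← hrep]; exact hzf
  rcases Sym2.mem_iff.mp hzab with rfl | rfl
  · exact ⟨z, b, hrep, hab, hvz, hu_nadj z hma, hu_nadj b hmb,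
      fun hh => hu_nmem (hh ▸ hma), fun hh => hu_nmem (hh ▸ hmb),
      fun hh => hv_nmem (hh ▸ hma), fun hh => hv_nmem (hh ▸ hmb)⟩
  · exact ⟨z, a, by rw [hrep]; exact Sym2.eq_swap, hab.symm, hvz, hu_nadj z hmb, hu_nadj a hma,
      fun hh => hu_nmem (hh ▸ hmb), fun hh => hu_nmem (hh ▸ hma),
      fun hh => hv_nmem (hh ▸ hmb), fun hh => hv_nmem (hh ▸ hma)⟩

end StmtFourHelpers


/-- In a connected chordal graph, every maximal utter clique
[W,F] satisfies F = E(W) ∪ δ(W); in particular no edge of F has both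
endpoints outside W. -/
theorem stmt4 (G : SimpleGraph V) (hconn : G.Connected) (hch : Chordal G)
    (W : Finset V) (F : Finset G.edgeSet) (h : IsMaxUtterClique G W F) :
    F = edgesIn G W ∪ edgesCut G W ∧ F ∩ edgesOut G W = ∅ := by
  obtain ⟨hcl, hmaxV, hmaxE⟩ := h
  obtain ⟨hVV, hVE, hEE⟩ := (isUtterClique_iff' G W F).mp hcl
  -- Step A: every edge of F has an endpoint in W
  have stepA : ∀ e ∈ F, ∃ z ∈ (e : Sym2 V), z ∈ W := by
    intro e heF
    by_contra hno
    push_neg at hno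
    obtain ⟨u, v, hrep⟩ := sym2_rep (e : Sym2 V)
    have huv : G.Adj u v := G.mem_edgeSet.mp (hrep ▸ e.prop)
    have hmu : u ∈ (e : Sym2 V) := by rw [hrep]; exact Sym2.mem_mk_left u v
    have hmv : v ∈ (e : Sym2 V) := by rw [hrep]; exact Sym2.mem_mk_right u v
    have hu : u ∉ W := hno u hmu
    have hv : v ∉ W := hno v hmv
    have claimW : ∀ w ∈ W, G.Adj u w ∨ G.Adj v w := by
      intro w hw
      rcases hVE w hw e heF with hmem | ⟨z, hz, hwz⟩
      · rw [hrep] at hmem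
        rcases Sym2.mem_iff.mp hmem with rfl | rfl
        · exact absurd hw hu
        · exact absurd hw hv
      · rw [hrep] at hz
        rcases Sym2.mem_iff.mp hz with rfl | rfl
        · exact Or.inl hwz.symm
        · exact Or.inr hwz.symm
    have claimF : ∀ f ∈ F,
        (u ∈ (f : Sym2 V) ∨ ∃ z ∈ (f : Sym2 V), G.Adj u z) ∨
        (v ∈ (f : Sym2 V) ∨ ∃ z ∈ (f : Sym2 V), G.Adj v z) := by
      intro f hf
      by_cases hfe : f = e
      · subst hfe; exact Or.inl (Or.inl hmu)
      · rcases hEE f hf e heF hfe with ⟨z, hzf, hze⟩ | ⟨a, haf, b, hbe, hab⟩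
        · rw [hrep] at hze
          rcases Sym2.mem_iff.mp hze with rfl | rfl
          · exact Or.inl (Or.inl hzf)
          · exact Or.inr (Or.inl hzf)
        · rw [hrep] at hbe
          rcases Sym2.mem_iff.mp hbe with rfl | rfl
          · exact Or.inl (Or.inr ⟨a, haf, hab.symm⟩)
          · exact Or.inr (Or.inr ⟨a, haf, hab.symm⟩)
    have side : ∀ c : V, c ∉ W → (∀ w ∈ W, G.Adj c w) →
        (∀ f ∈ F, c ∈ (f : Sym2 V) ∨ ∃ z ∈ (f : Sym2 V), G.Adj c z) → False := by
      intro c hc hWall hFall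
      refine hmaxV c hc ((isUtterClique_iff' G (insert c W) F).mpr ⟨?_, ?_, hEE⟩)
      · intro a ha b hb hne
        rcases Finset.mem_insert.mp ha with ha' | ha' <;>
          rcases Finset.mem_insert.mp hb with hb' | hb'
        · exact absurd (ha'.trans hb'.symm) hne
        · subst ha'; exact hWall b hb'
        · subst hb'; exact (hWall a ha').symm
        · exact hVV a ha' b hb' hne
      · intro a ha f hf
        rcases Finset.mem_insert.mp ha with ha' | ha'
        · subst ha'; exact hFall f hf
        · exact hVE a ha' f hf
    have getOb : ∀ c : V,
        ¬ ((∀ w ∈ W, G.Adj c w) ∧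
          (∀ f ∈ F, c ∈ (f : Sym2 V) ∨ ∃ z ∈ (f : Sym2 V), G.Adj c z)) →
        (∃ w ∈ W, ¬ G.Adj c w) ∨
          (∃ f ∈ F, ¬ (c ∈ (f : Sym2 V) ∨ ∃ z ∈ (f : Sym2 V), G.Adj c z)) := by
      intro c hc
      rcases not_and_or.mp hc with hA | hA
      · left; push_neg at hA
        obtain ⟨w, hw1, hw2⟩ := hA
        exact ⟨w, hw1, hw2⟩
      · right
        obtain ⟨f, hf⟩ := not_forall.mp hA
        obtain ⟨hfF, hnP⟩ := _root_.not_imp.mp hf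
        exact ⟨f, hfF, hnP⟩
    by_cases hAllu : (∀ w ∈ W, G.Adj u w) ∧
        (∀ f ∈ F, u ∈ (f : Sym2 V) ∨ ∃ z ∈ (f : Sym2 V), G.Adj u z)
    · exact side u hu hAllu.1 hAllu.2
    by_cases hAllv : (∀ w ∈ W, G.Adj v w) ∧
        (∀ f ∈ F, v ∈ (f : Sym2 V) ∨ ∃ z ∈ (f : Sym2 V), G.Adj v z)
    · exact side v hv hAllv.1 hAllv.2
    rcases getOb u hAllu with ⟨w1, hw1W, hw1u⟩ | ⟨f1, hf1F, hf1Pa⟩ <;>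
      rcases getOb v hAllv with ⟨w2, hw2W, hw2v⟩ | ⟨f2, hf2F, hf2Pb⟩
    · -- two vertex obstructions
      have hvw1 : G.Adj v w1 := (claimW w1 hw1W).resolve_left hw1u
      have huw2 : G.Adj u w2 := (claimW w2 hw2W).resolve_right hw2v
      have hne12 : w2 ≠ w1 := fun hh => hw1u (hh ▸ huw2)
      exact cross_ww hch huv huw2 hw2v hvw1 hw1u (hVV w2 hw2W w1 hw1W hne12)
        (fun hh => hu (hh ▸ hw1W)) (fun hh => hv (hh ▸ hw2W))
    · -- w1 on the v-side, f2 on the u-side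
      have hvw1 : G.Adj v w1 := (claimW w1 hw1W).resolve_left hw1u
      have hPaf2 : u ∈ (f2 : Sym2 V) ∨ ∃ z ∈ (f2 : Sym2 V), G.Adj u z :=
        (claimF f2 hf2F).resolve_right hf2Pb
      obtain ⟨p, p', hfrep, hpp', hup2, hvp, hvp', hvnp, hvnp', hunp, hunp'⟩ :=
        edge_unpack huv.symm hPaf2 hf2Pb
      have hcon : G.Adj w1 p ∨ G.Adj w1 p' := by
        rcases hVE w1 hw1W f2 hf2F with hmem | ⟨z, hz, hwz⟩
        · rw [hfrep] at hmem
          rcases Sym2.mem_iff.mp hmem with rfl | rfl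
          · exact absurd hup2 hw1u
          · exact absurd hvw1 hvp'
        · rw [hfrep] at hz
          rcases Sym2.mem_iff.mp hz with rfl | rfl
          · exact Or.inl hwz
          · exact Or.inr hwz
      exact cross_wf hch huv.symm hvw1 hw1u (fun hh => hu (hh ▸ hw1W))
        hpp' hup2 hvp hvp' hvnp hvnp' hunp' hcon
    · -- f1 on the v-side, w2 on the u-side
      have huw2 : G.Adj u w2 := (claimW w2 hw2W).resolve_right hw2v
      have hPbf1 : v ∈ (f1 : Sym2 V) ∨ ∃ z ∈ (f1 : Sym2 V), G.Adj v z :=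
        (claimF f1 hf1F).resolve_left hf1Pa
      obtain ⟨p, p', hfrep, hpp', hvp2, hup, hup', hunp, hunp', hvnp, hvnp'⟩ :=
        edge_unpack huv hPbf1 hf1Pa
      have hcon : G.Adj w2 p ∨ G.Adj w2 p' := by
        rcases hVE w2 hw2W f1 hf1F with hmem | ⟨z, hz, hwz⟩
        · rw [hfrep] at hmem
          rcases Sym2.mem_iff.mp hmem with rfl | rfl
          · exact absurd hvp2 hw2v
          · exact absurd huw2 hup'
        · rw [hfrep] at hz
          rcases Sym2.mem_iff.mp hz with rfl | rfl
          · exact Or.inl hwz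
          · exact Or.inr hwz
      exact cross_wf hch huv huw2 hw2v (fun hh => hv (hh ▸ hw2W))
        hpp' hvp2 hup hup' hunp hunp' hvnp' hcon
    · -- two edge obstructions
      have hPbf1 : v ∈ (f1 : Sym2 V) ∨ ∃ z ∈ (f1 : Sym2 V), G.Adj v z :=
        (claimF f1 hf1F).resolve_left hf1Pa
      have hPaf2 : u ∈ (f2 : Sym2 V) ∨ ∃ z ∈ (f2 : Sym2 V), G.Adj u z :=
        (claimF f2 hf2F).resolve_right hf2Pb
      obtain ⟨p, p', hf1rep, hpp', hvp, hup, hup', hunp, hunp', hvnp, hvnp'⟩ :=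
        edge_unpack huv hPbf1 hf1Pa
      obtain ⟨x, x', hf2rep, hxx', hux, hvx, hvx', hvnx, hvnx', hunx, hunx'⟩ :=
        edge_unpack huv.symm hPaf2 hf2Pb
      have dxp : x ≠ p := fun hh => hup (hh ▸ hux)
      have dxp' : x ≠ p' := fun hh => hup' (hh ▸ hux)
      have hf12 : f2 ≠ f1 := fun hh => hf1Pa (hh ▸ hPaf2)
      by_cases hx'p : x' = p
      · exact hvx' (hx'p ▸ hvp)
      by_cases hx'p' : x' = p'
      · subst hx'p'
        exact cross_shared hch huv hux hvx hxx' hup' hvx' hpp'.symm hvp hup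
          hunp' hunp hvnx hvnp'
      · have hcon : G.Adj x p ∨ G.Adj x p' ∨ G.Adj x' p ∨ G.Adj x' p' := by
          rcases hEE f2 hf2F f1 hf1F hf12 with ⟨z, hz2, hz1⟩ | ⟨a, ha2, b, hb1, hab⟩
          · rw [hf2rep] at hz2; rw [hf1rep] at hz1
            rcases Sym2.mem_iff.mp hz2 with rfl | rfl <;>
              rcases Sym2.mem_iff.mp hz1 with rfl | rfl
            · exact absurd rfl dxp
            · exact absurd rfl dxp'
            · exact absurd rfl hx'p
            · exact absurd rfl hx'p'
          · rw [hf2rep] at ha2; rw [hf1rep] at hb1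
            rcases Sym2.mem_iff.mp ha2 with rfl | rfl <;>
              rcases Sym2.mem_iff.mp hb1 with rfl | rfl
            · exact Or.inl hab
            · exact Or.inr (Or.inl hab)
            · exact Or.inr (Or.inr (Or.inl hab))
            · exact Or.inr (Or.inr (Or.inr hab))
        exact cross_ff hch huv hxx' hux hvx hvx' hvnx hvnx' hunx'
          hpp' hvp hup hup' hunp hunp' hvnp' dxp dxp' hx'p hx'p' hcon
  refine ⟨?_, ?_⟩
  · -- F = edgesIn ∪ edgesCut
    apply Finset.Subset.antisymm
    · intro e heF
      obtain ⟨z, hz, hzW⟩ := stepA e heF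
      by_cases hall : ∀ x ∈ (e : Sym2 V), x ∈ W
      · exact Finset.mem_union_left _ (Finset.mem_filter.mpr ⟨Finset.mem_univ _, hall⟩)
      · push_neg at hall
        exact Finset.mem_union_right _
          (Finset.mem_filter.mpr ⟨Finset.mem_univ _, ⟨z, hz, hzW⟩, hall⟩)
    · intro e heIn
      have hend : ∃ z ∈ (e : Sym2 V), z ∈ W := by
        rcases Finset.mem_union.mp heIn with hh | hh
        · obtain ⟨a, b, hrep⟩ := sym2_rep (e : Sym2 V)
          have hma : a ∈ (e : Sym2 V) := by rw [hrep]; exact Sym2.mem_mk_left a b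
          exact ⟨a, hma, (Finset.mem_filter.mp hh).2 a hma⟩
        · exact (Finset.mem_filter.mp hh).2.1
      obtain ⟨u0, hu0e, hu0W⟩ := hend
      by_contra heF
      refine hmaxE e heF ((isUtterClique_iff' G W (insert e F)).mpr ⟨hVV, ?_, ?_⟩)
      · intro a ha f hf
        rcases Finset.mem_insert.mp hf with hf' | hf'
        · subst hf'
          by_cases hau : a = u0
          · subst hau; exact Or.inl hu0e
          · exact Or.inr ⟨u0, hu0e, hVV a ha u0 hu0W hau⟩
        · exact hVE a ha f hf'
      · intro f hf g hg hne
        rcases Finset.mem_insert.mp hf with hf' | hf' <;>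
          rcases Finset.mem_insert.mp hg with hg' | hg'
        · exact absurd (hf'.trans hg'.symm) hne
        · subst hf'
          rcases hVE u0 hu0W g hg' with hmem | ⟨z, hz, hz2⟩
          · exact Or.inl ⟨u0, hu0e, hmem⟩
          · exact Or.inr ⟨u0, hu0e, z, hz, hz2⟩
        · subst hg'
          rcases hVE u0 hu0W f hf' with hmem | ⟨z, hz, hz2⟩
          · exact Or.inl ⟨u0, hmem, hu0e⟩
          · exact Or.inr ⟨z, hz, u0, hu0e, hz2.symm⟩
        · exact hEE f hf' g hg' hne
  · -- F ∩ edgesOut = ∅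
    rw [Finset.eq_empty_iff_forall_notMem]
    intro e he
    obtain ⟨heF, heO⟩ := Finset.mem_inter.mp he
    obtain ⟨z, hz, hzW⟩ := stepA e heF
    exact (Finset.mem_filter.mp heO).2 z hz hzW

end
end

section
/- Let G=(V,E) be a finite simple graph, w ∈ V, and W ⊆ N(w) with |W| ≥ 2. The inequality x(W) + (α₂(G[W]) − 1)·x_w ≤ α₂(G[W]) is valid for the co-2-plex polytope P(G), and it defines a facet of P(G) if and only if both of the following hold: (i) no vertex u ∈ V ∖ (W ∪ {w}) is adjacent to every vertex of W; (ii) for every v ∈ N(w) ∖ W, α₂(G[W ∪ {v}]) = α₂(G[W]) + 1. -/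
set_option linter.unusedSectionVars false
set_option maxHeartbeats 1600000


open Finset
open scoped Classical

noncomputable section

variable {V : Type*} [Fintype V]

lemma isCo2Plex_subset {G : SimpleGraph V} {S T : Finset V} (h : IsCo2Plex G S) (hTS : T ⊆ S) :
    IsCo2Plex G T := fun u hu =>
  le_trans (Finset.card_le_card (Finset.filter_subset_filter _ hTS)) (h u (hTS hu))

lemma le_co2plexNumOn (G : SimpleGraph V) {S W : Finset V} (hSW : S ⊆ W) (hS : IsCo2Plex G S) :
    S.card ≤ co2plexNumOn G W := by
  have := Finset.le_sup (f := fun S : Finset V => if S ⊆ W ∧ IsCo2Plex G S then S.card else 0)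
    (Finset.mem_univ S)
  rwa [if_pos ⟨hSW, hS⟩] at this

lemma exists_max_co2plex (G : SimpleGraph V) (W : Finset V) :
    ∃ S : Finset V, S ⊆ W ∧ IsCo2Plex G S ∧ S.card = co2plexNumOn G W := by
  obtain ⟨S, -, hS⟩ := Finset.exists_mem_eq_sup (univ : Finset (Finset V)) univ_nonempty
    (fun S : Finset V => if S ⊆ W ∧ IsCo2Plex G S then S.card else 0)
  by_cases h : S ⊆ W ∧ IsCo2Plex G S
  · exact ⟨S, h.1, h.2, by rw [co2plexNumOn, hS, if_pos h]⟩
  · refine ⟨∅, empty_subset _, fun u hu => absurd hu (notMem_empty u), ?_⟩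
    rw [card_empty, co2plexNumOn, hS, if_neg h]

lemma isCo2Plex_pair (G : SimpleGraph V) (a b : V) : IsCo2Plex G {a, b} := by
  intro u hu
  rw [Finset.card_le_one]
  intro x hx y hy
  rw [mem_filter, mem_insert, mem_singleton] at hx hy
  have hxu : x ≠ u := fun h => G.loopless.irrefl u (h ▸ hx.2)
  have hyu : y ≠ u := fun h => G.loopless.irrefl u (h ▸ hy.2)
  rw [mem_insert, mem_singleton] at hu
  rcases hu with rfl | rfl
  · rcases hx.1 with rfl | rfl
    · exact absurd rfl hxu
    · rcases hy.1 with rfl | rfl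
      · exact absurd rfl hyu
      · rfl
  · rcases hx.1 with rfl | rfl
    · rcases hy.1 with rfl | rfl
      · rfl
      · exact absurd rfl hyu
    · exact absurd rfl hxu

lemma two_le_co2plexNumOn (G : SimpleGraph V) {W : Finset V} (h : 2 ≤ W.card) :
    2 ≤ co2plexNumOn G W := by
  obtain ⟨a, ha, b, hb, hab⟩ := Finset.one_lt_card.1 h
  have hsub : ({a, b} : Finset V) ⊆ W := by
    intro x hx; rcases mem_insert.1 hx with rfl | hx
    · exact ha
    · exact (mem_singleton.1 hx) ▸ hb
  have := le_co2plexNumOn G hsub (isCo2Plex_pair G a b)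
  rwa [card_pair hab] at this

lemma co2plexNumOn_le (G : SimpleGraph V) {W : Finset V} {m : ℕ}
    (h : ∀ S : Finset V, S ⊆ W → IsCo2Plex G S → S.card ≤ m) : co2plexNumOn G W ≤ m := by
  apply Finset.sup_le
  intro S _
  by_cases hc : S ⊆ W ∧ IsCo2Plex G S
  · rw [if_pos hc]; exact h S hc.1 hc.2
  · rw [if_neg hc]; exact Nat.zero_le m

lemma sum_chiV (W S : Finset V) : ∑ v ∈ W, chiV S v = ((W ∩ S).card : ℝ) := by
  rw [show (∑ v ∈ W, chiV S v) = ∑ v ∈ W, if v ∈ S then (1:ℝ) else 0 from rfl,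
    Finset.sum_boole, Finset.filter_mem_eq_inter]

lemma sumA_eq {W : Finset V} {w : V} (hw : w ∉ W) (c : ℝ) (x : V → ℝ) :
    ∑ v, (if v ∈ W then (1:ℝ) else if v = w then c else 0) * x v
      = ∑ v ∈ W, x v + c * x w := by
  have key : ∀ v, (if v ∈ W then (1:ℝ) else if v = w then c else 0) * x v
      = (if v ∈ W then x v else 0) + (if v = w then c * x v else 0) := by
    intro v
    by_cases h1 : v ∈ W
    · rw [if_pos h1, if_pos h1, if_neg (fun h : v = w => hw (h ▸ h1)), one_mul, add_zero]
    · rw [if_neg h1, if_neg h1, zero_add]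
      by_cases h2 : v = w
      · rw [if_pos h2, if_pos h2]
      · rw [if_neg h2, if_neg h2, zero_mul]
  rw [Finset.sum_congr rfl (fun v _ => key v), Finset.sum_add_distrib,
    Finset.sum_ite_eq' univ w (fun v => c * x v), if_pos (mem_univ w),
    Finset.sum_ite_mem univ W x, univ_inter]

lemma filter_card_le_one {α : Type*} {S : Finset α} {p : α → Prop} {y : α}
    (h : ∀ x ∈ S, p x → x = y) : (S.filter p).card ≤ 1 := by
  have hsub : S.filter p ⊆ {y} := by
    intro x hx
    rw [mem_filter] at hx
    rw [mem_singleton]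
    exact h x hx.1 hx.2
  simpa using card_le_card hsub

lemma co2plex_bound {G : SimpleGraph V} {S : Finset V} (hS : IsCo2Plex G S) {u x y : V}
    (hu : u ∈ S) (hx : x ∈ S) (hy : y ∈ S) (hxy : x ≠ y)
    (hax : G.Adj u x) (hay : G.Adj u y) : False := by
  have hsub : ({x, y} : Finset V) ⊆ S.filter (fun v => G.Adj u v) := by
    intro t ht
    rcases mem_insert.1 ht with rfl | ht'
    · exact mem_filter.2 ⟨hx, hax⟩
    · rw [mem_singleton] at ht'
      rw [ht']
      exact mem_filter.2 ⟨hy, hay⟩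
  have hcc := card_le_card hsub
  rw [card_pair hxy] at hcc
  have h1 := hS u hu
  omega

lemma isCo2Plex_triple {G : SimpleGraph V} {p q r : V} (h1 : ¬ G.Adj p r) (h2 : ¬ G.Adj r q) :
    IsCo2Plex G {p, q, r} := by
  intro u hu
  rcases mem_insert.1 hu with rfl | hu'
  · refine filter_card_le_one (y := q) ?_
    intro x hx hax
    rcases mem_insert.1 hx with rfl | hx'
    · exact absurd hax (G.loopless.irrefl _)
    · rcases mem_insert.1 hx' with rfl | hx''
      · rfl
      · rw [mem_singleton] at hx''
        rw [hx''] at hax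
        exact absurd hax h1
  · rcases mem_insert.1 hu' with rfl | hu''
    · refine filter_card_le_one (y := p) ?_
      intro x hx hax
      rcases mem_insert.1 hx with rfl | hx'
      · rfl
      · rcases mem_insert.1 hx' with rfl | hx''
        · exact absurd hax (G.loopless.irrefl _)
        · rw [mem_singleton] at hx''
          rw [hx''] at hax
          exact absurd hax.symm h2
    · rw [mem_singleton] at hu''
      subst hu''
      refine filter_card_le_one (y := p) ?_
      intro x hx hax
      rcases mem_insert.1 hx with rfl | hx'
      · rfl
      · rcases mem_insert.1 hx' with rfl | hx''
        · exact absurd hax h2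
        · rw [mem_singleton] at hx''
          rw [hx''] at hax
          exact absurd hax (G.loopless.irrefl _)

lemma inter_card_le_one {G : SimpleGraph V} [DecidableRel G.Adj] {w : V} {W S : Finset V}
    (hW : W ⊆ G.neighborFinset w) (hS : IsCo2Plex G S) (hwS : w ∈ S) :
    (W ∩ S).card ≤ 1 := by
  refine le_trans (card_le_card ?_) (hS w hwS)
  intro v hv
  rw [mem_inter] at hv
  have hadj : G.Adj w v := by simpa using hW hv.1
  simp only [mem_filter]
  exact ⟨hv.2, hadj⟩

lemma chi_valid {G : SimpleGraph V} [DecidableRel G.Adj] {w : V} {W : Finset V}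
    (hW : W ⊆ G.neighborFinset w) {S : Finset V} (hS : IsCo2Plex G S) :
    ((W ∩ S).card : ℝ) + ((co2plexNumOn G W : ℝ) - 1) * chiV S w ≤ (co2plexNumOn G W : ℝ) := by
  by_cases hwS : w ∈ S
  · have h1 : ((W ∩ S).card : ℝ) ≤ 1 := by
      exact_mod_cast inter_card_le_one hW hS hwS
    rw [chiV, if_pos hwS, mul_one]
    linarith
  · rw [chiV, if_neg hwS, mul_zero, add_zero]
    have : (W ∩ S).card ≤ co2plexNumOn G W :=
      le_co2plexNumOn G (inter_subset_left) (isCo2Plex_subset hS (inter_subset_right))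
    exact_mod_cast this

lemma tight_cases {G : SimpleGraph V} [DecidableRel G.Adj] {w : V} {W S : Finset V}
    (hW : W ⊆ G.neighborFinset w)
    (ht : ((W ∩ S).card : ℝ) + ((co2plexNumOn G W : ℝ) - 1) * chiV S w = (co2plexNumOn G W : ℝ))
    (hS : IsCo2Plex G S) :
    (w ∈ S ∧ (W ∩ S).card = 1) ∨ (w ∉ S ∧ (W ∩ S).card = co2plexNumOn G W) := by
  by_cases hwS : w ∈ S
  · left
    refine ⟨hwS, ?_⟩
    rw [chiV, if_pos hwS, mul_one] at ht
    have : ((W ∩ S).card : ℝ) = 1 := by linarith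
    exact_mod_cast this
  · right
    refine ⟨hwS, ?_⟩
    rw [chiV, if_neg hwS, mul_zero, add_zero] at ht
    exact_mod_cast ht

/-- The linear functional `x ↦ ∑ v, a v * x v`. -/

def coefLM (a : V → ℝ) : (V → ℝ) →ₗ[ℝ] ℝ where
  toFun x := ∑ v, a v * x v
  map_add' x y := by
    simp only [Pi.add_apply, mul_add, Finset.sum_add_distrib]
  map_smul' r x := by
    simp only [Pi.smul_apply, smul_eq_mul, RingHom.id_apply, Finset.mul_sum]
    exact Finset.sum_congr rfl fun v _ => by ring

lemma polytope_valid {G : SimpleGraph V} [DecidableRel G.Adj] {w : V} {W : Finset V}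
    (hW : W ⊆ G.neighborFinset w) :
    ∀ x ∈ co2PlexPolytope G,
      ∑ v ∈ W, x v + ((co2plexNumOn G W : ℝ) - 1) * x w ≤ (co2plexNumOn G W : ℝ) := by
  intro x hx
  have hlin : IsLinearMap ℝ (fun x : V → ℝ =>
      ∑ v ∈ W, x v + ((co2plexNumOn G W : ℝ) - 1) * x w) := by
    constructor
    · intro x y
      simp only [Pi.add_apply, Finset.sum_add_distrib]; ring
    · intro r x
      simp only [Pi.smul_apply, smul_eq_mul, mul_add, Finset.mul_sum]; ring
  have hconv := convex_halfSpace_le hlin (co2plexNumOn G W : ℝ)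
  refine convexHull_min ?_ hconv hx
  rintro y ⟨S, hS, rfl⟩
  show ∑ v ∈ W, chiV S v + _ ≤ _
  rw [sum_chiV]
  exact chi_valid hW hS

lemma tight_vertex_zero {G : SimpleGraph V} {a : V → ℝ} {c : ℝ} {z : V}
    (hvalid : ∀ S : Finset V, IsCo2Plex G S → ∑ v, a v * chiV S v ≤ c)
    (hzero : ∀ S : Finset V, IsCo2Plex G S → (∑ v, a v * chiV S v = c) → z ∉ S)
    {x : V → ℝ} (hx : x ∈ co2PlexPolytope G) (ht : ∑ v, a v * x v = c) :
    x z = 0 := by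
  rw [co2PlexPolytope, _root_.convexHull_eq] at hx
  obtain ⟨ι, t, wt, p, hw0, hw1, hp, hcm⟩ := hx
  rw [Finset.centerMass, hw1, inv_one, one_smul] at hcm
  have hLsum : coefLM a x = ∑ i ∈ t, wt i * coefLM a (p i) := by
    rw [← hcm, map_sum]
    exact Finset.sum_congr rfl fun i _ => by rw [map_smul, smul_eq_mul]
  have hLx : coefLM a x = c := ht
  have hle : ∀ i ∈ t, coefLM a (p i) ≤ c := by
    intro i hi
    obtain ⟨S, hS, hpS⟩ := hp i hi
    rw [hpS]
    exact hvalid S hS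
  have hkey : ∀ i ∈ t, wt i * (c - coefLM a (p i)) = 0 := by
    have hsum0 : ∑ i ∈ t, wt i * (c - coefLM a (p i)) = 0 := by
      have : ∑ i ∈ t, wt i * (c - coefLM a (p i))
          = c * ∑ i ∈ t, wt i - ∑ i ∈ t, wt i * coefLM a (p i) := by
        rw [Finset.mul_sum, ← Finset.sum_sub_distrib]
        exact Finset.sum_congr rfl fun i _ => by ring
      rw [this, hw1, mul_one, ← hLsum, hLx, sub_self]
    exact (Finset.sum_eq_zero_iff_of_nonneg fun i hi =>
      mul_nonneg (hw0 i hi) (sub_nonneg.2 (hle i hi))).1 hsum0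
  have hxz : x z = ∑ i ∈ t, wt i * p i z := by
    rw [← hcm, Finset.sum_apply]
    exact Finset.sum_congr rfl fun i _ => rfl
  rw [hxz]
  apply Finset.sum_eq_zero
  intro i hi
  rcases mul_eq_zero.1 (hkey i hi) with h0 | h0
  · rw [h0, zero_mul]
  · obtain ⟨S, hS, hpS⟩ := hp i hi
    have htight : ∑ v, a v * chiV S v = c := by
      have := sub_eq_zero.1 h0
      rw [hpS] at this
      exact this.symm
    have hz := hzero S hS htight
    rw [hpS]
    show wt i * chiV S z = 0
    rw [chiV, if_neg hz, mul_zero]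

lemma facet_contra {a : V → ℝ} {c : ℝ} {z v0 : V}
    (hv0 : a v0 ≠ 0) (hne : v0 ≠ z) (haz : a z = 0)
    (f : Fin (Fintype.card V) → (V → ℝ)) (hf : AffineIndependent ℝ f)
    (htight : ∀ i, ∑ v, a v * f i v = c) (hzero : ∀ i, f i z = 0) : False := by
  classical
  have hn1 : 1 ≤ Fintype.card V := Fintype.card_pos_iff.2 ⟨v0⟩
  -- the linear map Φ
  set Φ : (V → ℝ) →ₗ[ℝ] ℝ × ℝ := (coefLM a).prod (LinearMap.proj z) with hΦ
  have hsurj : Function.Surjective Φ := by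
    rintro ⟨s, t⟩
    refine ⟨fun y => (if y = v0 then s / a v0 else 0) + (if y = z then t else 0), ?_⟩
    have h1 : coefLM a (fun y => (if y = v0 then s / a v0 else 0) + (if y = z then t else 0))
        = s := by
      show (∑ v, a v * _) = s
      have : ∀ v : V, a v * ((if v = v0 then s / a v0 else 0) + (if v = z then t else 0))
          = (if v = v0 then a v * (s / a v0) else 0) + (if v = z then a v * t else 0) := by
        intro v
        by_cases h1 : v = v0 <;> by_cases h2 : v = z <;>
          simp [h1, h2, mul_add]
      rw [Finset.sum_congr rfl (fun v _ => this v), Finset.sum_add_distrib,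
        Finset.sum_ite_eq' univ v0, Finset.sum_ite_eq' univ z, if_pos (mem_univ v0),
        if_pos (mem_univ z), haz, zero_mul, add_zero]
      field_simp
    have h2 : (fun y => (if y = v0 then s / a v0 else 0) + (if y = z then t else 0)) z = t := by
      simp [if_neg (Ne.symm hne)]
    exact Prod.ext h1 h2
  have hker : Module.finrank ℝ (LinearMap.ker Φ) + 2 = Fintype.card V := by
    have := LinearMap.finrank_range_add_finrank_ker Φ
    rw [LinearMap.range_eq_top.2 hsurj] at this
    rw [finrank_top, Module.finrank_prod, Module.finrank_self] at this
    rw [Module.finrank_pi ℝ] at this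
    omega
  -- all points lie in the affine subspace Φ = (c, 0)
  have hmem : ∀ i, Φ (f i) = (c, 0) := by
    intro i
    refine Prod.ext ?_ ?_
    · exact htight i
    · exact hzero i
  have hspan : vectorSpan ℝ (Set.range f) ≤ LinearMap.ker Φ := by
    rw [vectorSpan]
    apply Submodule.span_le.2
    rintro d hd
    rw [Set.mem_vsub] at hd
    obtain ⟨x, hx, y, hy, rfl⟩ := hd
    obtain ⟨i, rfl⟩ := hx
    obtain ⟨j, rfl⟩ := hy
    rw [SetLike.mem_coe, LinearMap.mem_ker, vsub_eq_sub, map_sub, hmem i, hmem j, sub_self]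
  have hfrank : Module.finrank ℝ (vectorSpan ℝ (Set.range f)) = Fintype.card V - 1 := by
    apply hf.finrank_vectorSpan
    rw [Fintype.card_fin]
    omega
  have hle := Submodule.finrank_mono hspan
  rw [hfrank] at hle
  omega

/-- Validity and facet characterization. -/
theorem stmt6 (G : SimpleGraph V) [DecidableRel G.Adj] (w : V) (W : Finset V)
    (hW : W ⊆ G.neighborFinset w) (hcard : 2 ≤ W.card) :
    (∀ x ∈ co2PlexPolytope G,
        ∑ v ∈ W, x v + ((co2plexNumOn G W : ℝ) - 1) * x w ≤ (co2plexNumOn G W : ℝ)) ∧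
      (IsFacet (co2PlexPolytope G)
          (fun v => if v ∈ W then 1 else if v = w then (co2plexNumOn G W : ℝ) - 1 else 0)
          (co2plexNumOn G W : ℝ) ↔
        ((∀ u : V, u ∉ W → u ≠ w → ¬ ∀ v ∈ W, G.Adj u v) ∧
          ∀ v : V, G.Adj w v → v ∉ W →
            co2plexNumOn G (insert v W) = co2plexNumOn G W + 1)) := by
  have hadjW : ∀ v ∈ W, G.Adj w v := fun v hv => by simpa using hW hv
  have hwW : w ∉ W := fun h => G.loopless.irrefl w (hadjW w h)
  set α : ℕ := co2plexNumOn G W with hα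
  have hα2 : 2 ≤ α := two_le_co2plexNumOn G hcard
  have hWne : W.Nonempty := card_pos.1 (by omega)
  obtain ⟨v0, hv0W⟩ := hWne
  have hsum_eq : ∀ x : V → ℝ,
      ∑ v, (if v ∈ W then (1:ℝ) else if v = w then (α:ℝ) - 1 else 0) * x v
        = ∑ v ∈ W, x v + ((α:ℝ) - 1) * x w := fun x => sumA_eq hwW _ x
  have hvalid := polytope_valid hW
  refine ⟨hvalid, ?_⟩
  have hvalidA : ∀ S : Finset V, IsCo2Plex G S →
      ∑ v, (if v ∈ W then (1:ℝ) else if v = w then (α:ℝ) - 1 else 0) * chiV S v ≤ (α:ℝ) := by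
    intro S hS
    rw [hsum_eq, sum_chiV]
    exact chi_valid hW hS
  have htcases : ∀ S : Finset V, IsCo2Plex G S →
      (∑ v, (if v ∈ W then (1:ℝ) else if v = w then (α:ℝ) - 1 else 0) * chiV S v = (α:ℝ)) →
      (w ∈ S ∧ (W ∩ S).card = 1) ∨ (w ∉ S ∧ (W ∩ S).card = α) := by
    intro S hS ht
    rw [hsum_eq, sum_chiV] at ht
    exact tight_cases hW ht hS
  constructor
  · -- facet → conditions
    intro hfac
    obtain ⟨-, ff, hffAI, hffP⟩ := hfac
    constructor
    · -- condition (i)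
      intro u huW huw hall
      have hz : ∀ S : Finset V, IsCo2Plex G S →
          (∑ v, (if v ∈ W then (1:ℝ) else if v = w then (α:ℝ) - 1 else 0) * chiV S v = (α:ℝ)) →
          u ∉ S := by
        intro S hS htS huS
        rcases htcases S hS htS with ⟨hwS, hc1⟩ | ⟨hwS, hcα⟩
        · obtain ⟨v1, hv1⟩ := card_eq_one.1 hc1
          have hv1m : v1 ∈ W ∩ S := hv1 ▸ mem_singleton_self v1
          have hv1W : v1 ∈ W := (mem_inter.1 hv1m).1
          have hv1S : v1 ∈ S := (mem_inter.1 hv1m).2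
          exact co2plex_bound hS hv1S hwS huS (fun h => huw h.symm)
            (hadjW v1 hv1W).symm (hall v1 hv1W).symm
        · have h2 : 1 < (W ∩ S).card := by omega
          obtain ⟨x, hx, y, hy, hxy⟩ := one_lt_card.1 h2
          exact co2plex_bound hS huS (mem_inter.1 hx).2 (mem_inter.1 hy).2 hxy
            (hall x (mem_inter.1 hx).1) (hall y (mem_inter.1 hy).1)
      refine facet_contra (a := fun v => if v ∈ W then (1:ℝ) else if v = w then (α:ℝ) - 1 else 0)
        (c := (α:ℝ)) (z := u) (v0 := v0) ?_ ?_ ?_ ff hffAI (fun i => (hffP i).2) ?_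
      · show (if v0 ∈ W then (1:ℝ) else if v0 = w then (α:ℝ) - 1 else 0) ≠ 0
        rw [if_pos hv0W]; norm_num
      · intro h; exact huW (h ▸ hv0W)
      · show (if u ∈ W then (1:ℝ) else if u = w then (α:ℝ) - 1 else 0) = 0
        rw [if_neg huW, if_neg huw]
      · intro i
        exact tight_vertex_zero hvalidA hz (hffP i).1 (hffP i).2
    · -- condition (ii)
      intro v hadj hvW
      by_contra hne
      have hvw : v ≠ w := fun h => G.loopless.irrefl w (h ▸ hadj)
      have hle : co2plexNumOn G (insert v W) ≤ α + 1 := by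
        apply co2plexNumOn_le
        intro S hSsub hSc
        have herase : S.erase v ⊆ W := by
          intro x hx
          rw [mem_erase] at hx
          exact (mem_insert.1 (hSsub hx.2)).resolve_left hx.1
        have h1 := le_co2plexNumOn G herase (isCo2Plex_subset hSc (erase_subset v S))
        have h2 : S.card ≤ (S.erase v).card + 1 := by
          by_cases hvS : v ∈ S
          · rw [card_erase_of_mem hvS]
            have h3 := Finset.card_pos.2 ⟨v, hvS⟩
            omega
          · rw [erase_eq_of_notMem hvS]
            omega
        omega
      have hge : α ≤ co2plexNumOn G (insert v W) := by
        obtain ⟨S₀, h1, h2, h3⟩ := exists_max_co2plex G W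
        have := le_co2plexNumOn G (h1.trans (subset_insert v W)) h2
        omega
      have heq : co2plexNumOn G (insert v W) = α := by omega
      have hz : ∀ S : Finset V, IsCo2Plex G S →
          (∑ t, (if t ∈ W then (1:ℝ) else if t = w then (α:ℝ) - 1 else 0) * chiV S t = (α:ℝ)) →
          v ∉ S := by
        intro S hS htS hvS
        rcases htcases S hS htS with ⟨hwS, hc1⟩ | ⟨hwS, hcα⟩
        · obtain ⟨v1, hv1⟩ := card_eq_one.1 hc1
          have hv1m : v1 ∈ W ∩ S := hv1 ▸ mem_singleton_self v1
          have hv1W : v1 ∈ W := (mem_inter.1 hv1m).1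
          have hv1S : v1 ∈ S := (mem_inter.1 hv1m).2
          exact co2plex_bound hS hwS hv1S hvS (fun h => hvW (h ▸ hv1W))
            (hadjW v1 hv1W) hadj
        · have hT : insert v (W ∩ S) ⊆ S := insert_subset hvS inter_subset_right
          have hTc : IsCo2Plex G (insert v (W ∩ S)) := isCo2Plex_subset hS hT
          have hTsub : insert v (W ∩ S) ⊆ insert v W :=
            insert_subset_insert v inter_subset_left
          have hcard2 : (insert v (W ∩ S)).card = α + 1 := by
            rw [card_insert_of_notMem (fun h => hvW (mem_inter.1 h).1), hcα]
          have := le_co2plexNumOn G hTsub hTc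
          rw [hcard2, heq] at this
          omega
      refine facet_contra (a := fun t => if t ∈ W then (1:ℝ) else if t = w then (α:ℝ) - 1 else 0)
        (c := (α:ℝ)) (z := v) (v0 := v0) ?_ ?_ ?_ ff hffAI (fun i => (hffP i).2) ?_
      · show (if v0 ∈ W then (1:ℝ) else if v0 = w then (α:ℝ) - 1 else 0) ≠ 0
        rw [if_pos hv0W]; norm_num
      · intro h; exact hvW (h ▸ hv0W)
      · show (if v ∈ W then (1:ℝ) else if v = w then (α:ℝ) - 1 else 0) = 0
        rw [if_neg hvW, if_neg hvw]
      · intro i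
        exact tight_vertex_zero hvalidA hz (hffP i).1 (hffP i).2
  · -- conditions → facet
    rintro ⟨hi, hii⟩
    refine ⟨fun x hx => by rw [hsum_eq]; exact hvalid x hx, ?_⟩
    obtain ⟨S₀, hS₀W, hS₀c, hS₀card⟩ := exists_max_co2plex G W
    have hwS₀ : w ∉ S₀ := fun h => hwW (hS₀W h)
    -- selection of a non-neighbor in W for outside vertices
    have hsel1e : ∀ u : V, ∃ v : V, v ∈ W ∧ (u ∉ W → u ≠ w → ¬ G.Adj u v) := by
      intro u
      by_cases hc : u ∉ W ∧ u ≠ w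
      · have h := hi u hc.1 hc.2
        push_neg at h
        obtain ⟨v, hv1, hv2⟩ := h
        exact ⟨v, hv1, fun _ _ => hv2⟩
      · exact ⟨v0, hv0W, fun h1 h2 => absurd ⟨h1, h2⟩ hc⟩
    choose sel1 hsel1W hsel1A using hsel1e
    -- selection of a maximum co-2-plex for neighbors outside W
    have hsel2e : ∀ u : V, ∃ T : Finset V,
        G.Adj w u → u ∉ W → T ⊆ insert u W ∧ IsCo2Plex G T ∧ T.card = α + 1 ∧ u ∈ T := by
      intro u
      by_cases hc : G.Adj w u ∧ u ∉ W
      · obtain ⟨T, hT1, hT2, hT3⟩ := exists_max_co2plex G (insert u W)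
        rw [hii u hc.1 hc.2] at hT3
        have hu : u ∈ T := by
          by_contra hu
          have hTW : T ⊆ W := fun x hx =>
            (mem_insert.1 (hT1 hx)).resolve_left (fun h => hu (h ▸ hx))
          have := le_co2plexNumOn G hTW hT2
          omega
        exact ⟨T, fun _ _ => ⟨hT1, hT2, hT3, hu⟩⟩
      · exact ⟨∅, fun h1 h2 => absurd ⟨h1, h2⟩ hc⟩
    choose sel2 hsel2 using hsel2e
    -- the roots
    set R : V → Finset V := fun i =>
      if i ∈ W then {w, i} else if i = w then S₀ else if G.Adj w i then sel2 i
      else {w, sel1 i, i} with hR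
    set f : V → (V → ℝ) := fun i => chiV (R i) with hf
    have hRW : ∀ i ∈ W, R i = {w, i} := fun i hi => if_pos hi
    have hRw : R w = S₀ := by rw [hR]; simp [hwW]
    have hRN : ∀ i, i ∉ W → i ≠ w → G.Adj w i → R i = sel2 i := by
      intro i h1 h2 h3; rw [hR]; simp [h1, h2, h3]
    have hRO : ∀ i, i ∉ W → i ≠ w → ¬ G.Adj w i → R i = {w, sel1 i, i} := by
      intro i h1 h2 h3; rw [hR]; simp [h1, h2, h3]
    -- each root is a co-2-plex and tight
    have hprops : ∀ i : V, IsCo2Plex G (R i) ∧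
        ((W ∩ R i).card : ℝ) + ((α:ℝ) - 1) * chiV (R i) w = (α:ℝ) := by
      intro i
      by_cases h1 : i ∈ W
      · rw [hRW i h1]
        refine ⟨isCo2Plex_pair G w i, ?_⟩
        have hint : W ∩ {w, i} = {i} := by
          ext x
          simp only [mem_inter, mem_insert, mem_singleton]
          constructor
          · rintro ⟨hxW, rfl | rfl⟩
            · exact absurd hxW hwW
            · rfl
          · rintro rfl; exact ⟨h1, Or.inr rfl⟩
        rw [hint, card_singleton, chiV, if_pos (mem_insert_self w {i})]
        push_cast; ring
      · by_cases h2 : i = w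
        · rw [h2, hRw]
          refine ⟨hS₀c, ?_⟩
          have hint : W ∩ S₀ = S₀ := inter_eq_right.2 hS₀W
          rw [hint, chiV, if_neg hwS₀, hS₀card]
          push_cast; ring
        · by_cases h3 : G.Adj w i
          · rw [hRN i h1 h2 h3]
            obtain ⟨hT1, hT2, hT3, hT4⟩ := hsel2 i h3 h1
            refine ⟨hT2, ?_⟩
            have hwT : w ∉ sel2 i := by
              intro h
              rcases mem_insert.1 (hT1 h) with h' | h'
              · exact h3.ne h'
              · exact hwW h'
            have hint : W ∩ sel2 i = (sel2 i).erase i := by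
              ext x
              simp only [mem_inter, mem_erase]
              constructor
              · rintro ⟨hxW, hxT⟩; exact ⟨fun h => h1 (h ▸ hxW), hxT⟩
              · rintro ⟨hxi, hxT⟩; exact ⟨(mem_insert.1 (hT1 hxT)).resolve_left hxi, hxT⟩
            rw [hint, card_erase_of_mem hT4, hT3, chiV, if_neg hwT]
            push_cast; ring
          · rw [hRO i h1 h2 h3]
            have hv1W := hsel1W i
            have hnadj : ¬ G.Adj i (sel1 i) := hsel1A i h1 h2
            refine ⟨isCo2Plex_triple h3 hnadj, ?_⟩
            have hint : W ∩ {w, sel1 i, i} = {sel1 i} := by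
              ext x
              simp only [mem_inter, mem_insert, mem_singleton]
              constructor
              · rintro ⟨hxW, rfl | rfl | rfl⟩
                · exact absurd hxW hwW
                · rfl
                · exact absurd hxW h1
              · rintro rfl; exact ⟨hv1W, Or.inr (Or.inl rfl)⟩
            rw [hint, card_singleton, chiV, if_pos (mem_insert_self w _)]
            push_cast; ring
    -- coordinate facts
    have hM1 : ∀ u : V, u ∉ W → u ≠ w → ∀ i : V, (u ∈ R i ↔ i = u) := by
      intro u huW huw i
      constructor
      · intro hmem
        by_cases h1 : i ∈ W
        · rw [hRW i h1] at hmem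
          rcases mem_insert.1 hmem with h | h
          · exact absurd h huw
          · rw [mem_singleton] at h
            exact absurd (by rw [h]; exact h1 : u ∈ W) huW
        · by_cases h2 : i = w
          · subst h2; rw [hRw] at hmem; exact absurd (hS₀W hmem) huW
          · by_cases h3 : G.Adj w i
            · rw [hRN i h1 h2 h3] at hmem
              obtain ⟨hT1, _, _, _⟩ := hsel2 i h3 h1
              rcases mem_insert.1 (hT1 hmem) with h | h
              · exact h.symm
              · exact absurd h huW
            · rw [hRO i h1 h2 h3] at hmem
              rcases mem_insert.1 hmem with h | h
              · exact absurd h huw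
              · rcases mem_insert.1 h with h' | h'
                · exact absurd (by rw [h']; exact hsel1W i : u ∈ W) huW
                · exact (mem_singleton.1 h').symm
      · intro h
        rw [h]
        by_cases h3 : G.Adj w u
        · rw [hRN u huW huw h3]
          exact (hsel2 u h3 huW).2.2.2
        · rw [hRO u huW huw h3]
          exact mem_insert.2 (Or.inr (mem_insert.2 (Or.inr (mem_singleton_self u))))
    -- affine independence
    have hAI : AffineIndependent ℝ f := by
      rw [affineIndependent_iff]
      intro s c hsum hvec
      have hcoord : ∀ y : V, ∑ i ∈ s, c i * f i y = 0 := by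
        intro y
        have h := congrFun hvec y
        simpa [Finset.sum_apply] using h
      have step1 : ∀ u ∈ s, u ∉ W → u ≠ w → c u = 0 := by
        intro u hus huW huw
        have h := hcoord u
        have key : ∀ i ∈ s, c i * f i u = if i = u then c i else 0 := by
          intro i _
          by_cases h' : i = u
          · rw [if_pos h', hf]
            show c i * chiV (R i) u = c i
            rw [chiV, if_pos ((hM1 u huW huw i).2 h'), mul_one]
          · rw [if_neg h', hf]
            show c i * chiV (R i) u = 0
            rw [chiV, if_neg (fun hm => h' ((hM1 u huW huw i).1 hm)), mul_zero]
        rw [Finset.sum_congr rfl key, Finset.sum_ite_eq' s u c, if_pos hus] at h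
        exact h
      have step2 : w ∈ s → c w = 0 := by
        intro hws
        have h := hcoord w
        have key : ∀ i ∈ s, c i * f i w = if i = w then 0 else c i := by
          intro i hi
          by_cases h1 : i ∈ W
          · rw [if_neg (fun h : i = w => hwW (h ▸ h1)), hf]
            show c i * chiV (R i) w = c i
            rw [hRW i h1, chiV, if_pos (mem_insert_self w {i}), mul_one]
          · by_cases h2 : i = w
            · rw [if_pos h2, hf]
              show c i * chiV (R i) w = 0
              rw [h2, hRw, chiV, if_neg hwS₀, mul_zero]
            · rw [if_neg h2, step1 i hi h1 h2, zero_mul]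
        rw [Finset.sum_congr rfl key] at h
        have hsplit : ∑ i ∈ s, c i
            = ∑ i ∈ s, ((if i = w then c i else 0) + (if i = w then 0 else c i)) :=
          Finset.sum_congr rfl (fun i _ => by by_cases h' : i = w <;> simp [h'])
        rw [hsplit, Finset.sum_add_distrib, h, add_zero, Finset.sum_ite_eq' s w c,
          if_pos hws] at hsum
        exact hsum
      have step3 : ∀ v' ∈ s, v' ∈ W → c v' = 0 := by
        intro v' hv's hv'W
        have h := hcoord v'
        have hv'w : v' ≠ w := fun h' => hwW (h' ▸ hv'W)
        have key : ∀ i ∈ s, c i * f i v' = if i = v' then c i else 0 := by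
          intro i his
          by_cases h' : i = v'
          · rw [if_pos h', hf]
            show c i * chiV (R i) v' = c i
            rw [h', hRW v' hv'W, chiV,
              if_pos (mem_insert.2 (Or.inr (mem_singleton_self v'))), mul_one]
          · rw [if_neg h']
            by_cases h1 : i ∈ W
            · rw [hf]
              show c i * chiV (R i) v' = 0
              rw [hRW i h1, chiV, if_neg, mul_zero]
              intro hm
              rcases mem_insert.1 hm with h'' | h''
              · exact hv'w h''
              · exact h' (mem_singleton.1 h'').symm
            · by_cases h2 : i = w
              · have hcw : c i = 0 := by rw [h2]; exact step2 (by rw [← h2]; exact his)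
                rw [hcw, zero_mul]
              · rw [step1 i his h1 h2, zero_mul]
        rw [Finset.sum_congr rfl key, Finset.sum_ite_eq' s v' c, if_pos hv's] at h
        exact h
      intro e he
      by_cases h1 : e ∈ W
      · exact step3 e he h1
      · by_cases h2 : e = w
        · subst h2; exact step2 he
        · exact step1 e he h1 h2
    -- transfer to Fin (card V)
    refine ⟨f ∘ (Fintype.equivFin V).symm,
      hAI.comp_embedding (Fintype.equivFin V).symm.toEmbedding, ?_⟩
    intro i
    constructor
    · exact subset_convexHull ℝ _ ⟨R ((Fintype.equivFin V).symm i), (hprops _).1, rfl⟩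
    · show ∑ v, (if v ∈ W then (1:ℝ) else if v = w then (α:ℝ) - 1 else 0)
          * f ((Fintype.equivFin V).symm i) v = (α:ℝ)
      rw [hsum_eq]
      show ∑ v ∈ W, chiV (R ((Fintype.equivFin V).symm i)) v
          + ((α:ℝ) - 1) * chiV (R ((Fintype.equivFin V).symm i)) w = (α:ℝ)
      rw [sum_chiV]
      exact (hprops _).2

end
end

section
/- Let G=(V,E) be a finite tree (a finite connected graph with no cycles). Then for every w ∈ V and every nonempty W ⊆ N(w), the star inequality x(W) + (|W| − 1)·x_w ≤ |W| defines a facet of the co-2-plex polytope P(G). -/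
open Finset
open scoped Classical

noncomputable section

variable {V : Type*} [Fintype V]

lemma aux_two_mid {α : Type*} {G : SimpleGraph α} (hac : G.IsAcyclic)
    {a b u v : α} (hu1 : G.Adj a u) (hu2 : G.Adj u b) (hv1 : G.Adj a v) (hv2 : G.Adj v b)
    (hab : a ≠ b) (huv : u ≠ v) : False := by
  have hp : (SimpleGraph.Walk.cons hu1 (SimpleGraph.Walk.cons hu2 SimpleGraph.Walk.nil)).IsPath := by
    simp [SimpleGraph.Walk.isPath_def, hu1.ne, hu2.ne, hab]
  have hq : (SimpleGraph.Walk.cons hv1 (SimpleGraph.Walk.cons hv2 SimpleGraph.Walk.nil)).IsPath := by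
    simp [SimpleGraph.Walk.isPath_def, hv1.ne, hv2.ne, hab]
  have := SimpleGraph.isAcyclic_iff_path_unique.mp hac ⟨_, hp⟩ ⟨_, hq⟩
  have hsupp := congrArg (fun P : G.Path a b => P.1.support) this
  simp at hsupp
  exact huv hsupp

lemma aux_no_triangle {α : Type*} {G : SimpleGraph α} (hac : G.IsAcyclic)
    {w a b : α} (ha : G.Adj w a) (hb : G.Adj w b) (hab : G.Adj a b) : False := by
  have hp : (SimpleGraph.Walk.cons hab SimpleGraph.Walk.nil).IsPath := by
    simp [SimpleGraph.Walk.isPath_def, hab.ne]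
  have hq : (SimpleGraph.Walk.cons ha.symm (SimpleGraph.Walk.cons hb SimpleGraph.Walk.nil)).IsPath := by
    simp [SimpleGraph.Walk.isPath_def, ha.ne', hb.ne, hab.ne]
  have := SimpleGraph.isAcyclic_iff_path_unique.mp hac ⟨_, hp⟩ ⟨_, hq⟩
  have hsupp := congrArg (fun P : G.Path a b => P.1.support) this
  simp at hsupp

/-- Value of the star functional on an incidence vector. -/
lemma aux_sum_chi {w : V} {W : Finset V} (hwW : w ∉ W) (S : Finset V) :
    ∑ v, (if v ∈ W then (1:ℝ) else if v = w then (W.card : ℝ) - 1 else 0) * chiV S v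
      = ((S ∩ W).card : ℝ) + (if w ∈ S then (W.card : ℝ) - 1 else 0) := by
  have key : ∀ v, (if v ∈ W then (1:ℝ) else if v = w then (W.card : ℝ) - 1 else 0) * chiV S v
      = (if v ∈ S ∩ W then (1:ℝ) else 0)
        + (if v = w then (if w ∈ S then (W.card : ℝ) - 1 else 0) else 0) := by
    intro v
    by_cases hvS : v ∈ S <;> by_cases hvW : v ∈ W <;> by_cases hvw : v = w <;>
      simp_all [chiV, Finset.mem_inter]
  rw [Finset.sum_congr rfl (fun v _ => key v), Finset.sum_add_distrib]
  congr 1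
  · rw [Fintype.sum_ite_mem]; simp
  · rw [Fintype.sum_ite_eq']


/-- In a tree, every star inequality (with W nonempty) defines
a facet of the co-2-plex polytope. -/
theorem stmt8 (G : SimpleGraph V) [DecidableRel G.Adj] (htree : G.IsTree)
    (w : V) (W : Finset V) (hW : W ⊆ G.neighborFinset w) (hne : W.Nonempty) :
    IsFacet (co2PlexPolytope G)
      (fun v => if v ∈ W then 1 else if v = w then (W.card : ℝ) - 1 else 0)
      (W.card : ℝ) := by
  have hac : G.IsAcyclic := htree.IsAcyclic
  have hadj : ∀ v ∈ W, G.Adj w v := fun v hv => (G.mem_neighborFinset w v).mp (hW hv)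
  have hwW : w ∉ W := fun h => G.irrefl (hadj w h)
  -- W is independent
  have hindep : ∀ a ∈ W, ∀ b ∈ W, ¬ G.Adj a b := fun a ha b hb hab =>
    aux_no_triangle hac (hadj a ha) (hadj b hb) hab
  -- any vertex ≠ w has at most one neighbor in W
  have honeNb : ∀ v, v ≠ w → ∀ a ∈ W, ∀ b ∈ W, G.Adj v a → G.Adj v b → a = b := by
    intro v hvw a ha b hb hva hvb
    by_contra hab
    exact aux_two_mid hac hva (hadj a ha).symm hvb (hadj b hb).symm hvw hab
  -- the tight co-2-plexes
  set Sv : V → Finset V := fun v => if v = w then W else if v ∈ W then {w, v} else insert v W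
    with hSv
  have hco : ∀ v, IsCo2Plex G (Sv v) := by
    intro v u hu
    refine Finset.card_le_one.mpr ?_
    intro a ha b hb
    simp only [Finset.mem_filter] at ha hb
    obtain ⟨ha1, ha2⟩ := ha
    obtain ⟨hb1, hb2⟩ := hb
    by_cases hvw : v = w
    · simp only [hSv, hvw, if_pos rfl] at hu ha1
      exact absurd ha2 (hindep u hu a ha1)
    · by_cases hvW : v ∈ W
      · simp only [hSv, if_neg hvw, if_pos hvW] at hu ha1 hb1
        have key : ∀ x, x ∈ ({w, v} : Finset V) → G.Adj u x → x = if u = w then v else w := by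
          intro x hx hadj'
          rcases Finset.mem_insert.mp hx with h | h
          · rw [h, if_neg (h ▸ hadj').ne]
          · have h' := Finset.mem_singleton.mp h
            have huv : u ≠ v := fun h'' => G.irrefl (h'' ▸ h' ▸ hadj')
            have huw : u = w := by
              rcases Finset.mem_insert.mp hu with h'' | h''
              · exact h''
              · exact absurd (Finset.mem_singleton.mp h'') huv
            rw [h', if_pos huw]
        rw [key a ha1 ha2, key b hb1 hb2]
      · simp only [hSv, if_neg hvw, if_neg hvW] at hu ha1 hb1
        rcases Finset.mem_insert.mp hu with huv | huW
        · subst huv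
          have haW : a ∈ W := (Finset.mem_insert.mp ha1).resolve_left
            (fun h => by subst h; exact G.irrefl ha2)
          have hbW : b ∈ W := (Finset.mem_insert.mp hb1).resolve_left
            (fun h => by subst h; exact G.irrefl hb2)
          exact honeNb u hvw a haW b hbW ha2 hb2
        · have key : ∀ c, c ∈ insert v W → G.Adj u c → c = v := by
            intro c hc hadj'
            rcases Finset.mem_insert.mp hc with h | h
            · exact h
            · exact absurd hadj' (hindep u huW c h)
          rw [key a ha1 ha2, key b hb1 hb2]
  -- tightness
  have htight : ∀ v, ∑ u, (if u ∈ W then (1:ℝ) else if u = w then (W.card : ℝ) - 1 else 0)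
      * chiV (Sv v) u = (W.card : ℝ) := by
    intro v
    rw [aux_sum_chi hwW]
    by_cases hvw : v = w
    · simp only [hSv, hvw, if_pos rfl, Finset.inter_self, if_neg hwW]
      ring
    · by_cases hvW : v ∈ W
      · have h1 : ({w, v} : Finset V) ∩ W = {v} := by
          ext x
          simp only [Finset.mem_inter, Finset.mem_insert, Finset.mem_singleton]
          constructor
          · rintro ⟨h | h, hxW⟩
            · exact absurd (h ▸ hxW) hwW
            · exact h
          · rintro rfl; exact ⟨Or.inr rfl, hvW⟩
        have h2 : w ∈ ({w, v} : Finset V) := Finset.mem_insert_self _ _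
        simp only [hSv, if_neg hvw, if_pos hvW, h1, Finset.card_singleton]
        rw [if_pos h2]
        push_cast
        ring
      · have h1 : (insert v W) ∩ W = W := by
          apply Finset.inter_eq_right.mpr
          exact Finset.subset_insert _ _
        have h2 : w ∉ insert v W := by
          simp only [Finset.mem_insert]
          rintro (h | h)
          · exact hvw h.symm
          · exact hwW h
        simp only [hSv, if_neg hvw, if_neg hvW, h1, if_neg h2, add_zero]
  constructor
  · -- validity
    intro x hx
    have hconv : Convex ℝ {x : V → ℝ |
        ∑ v, (if v ∈ W then (1:ℝ) else if v = w then (W.card : ℝ) - 1 else 0) * x v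
          ≤ (W.card : ℝ)} := by
      apply convex_halfSpace_le
      constructor
      · intro y z
        simp only [Pi.add_apply, mul_add]
        rw [Finset.sum_add_distrib]
      · intro c y
        simp only [Pi.smul_apply, smul_eq_mul, Finset.mul_sum]
        congr 1; ext v; ring
    refine convexHull_min ?_ hconv hx
    rintro y ⟨S, hS, rfl⟩
    simp only [Set.mem_setOf_eq]
    rw [aux_sum_chi hwW]
    by_cases hwS : w ∈ S
    · have hcard : (S ∩ W).card ≤ 1 := by
        have hle := Finset.card_le_one.mp (hS w hwS)
        refine Finset.card_le_one.mpr ?_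
        intro a ha b hb
        rw [Finset.mem_inter] at ha hb
        exact hle a (by simp only [Finset.mem_filter]; exact ⟨ha.1, hadj a ha.2⟩)
          b (by simp only [Finset.mem_filter]; exact ⟨hb.1, hadj b hb.2⟩)
      rw [if_pos hwS]
      have : ((S ∩ W).card : ℝ) ≤ 1 := by exact_mod_cast hcard
      linarith
    · rw [if_neg hwS, add_zero]
      exact_mod_cast Finset.card_le_card (Finset.inter_subset_right)
  · -- facet points
    have hmem : ∀ v, chiV (Sv v) ∈ co2PlexPolytope G := by
      intro v
      exact subset_convexHull ℝ _ ⟨Sv v, hco v, rfl⟩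
    have haff : AffineIndependent ℝ (fun v : V => chiV (Sv v)) := by
      rw [affineIndependent_iff_of_fintype]
      intro g hg0 hcomb
      rw [Finset.weightedVSub_eq_linear_combination _ hg0] at hcomb
      have hE : ∀ u, ∑ v, g v * chiV (Sv v) u = 0 := by
        intro u
        have := congrFun hcomb u
        simpa [Finset.sum_apply] using this
      -- step 1: g c = 0 for c ∉ W, c ≠ w
      have hc : ∀ c, c ∉ W → c ≠ w → g c = 0 := by
        intro c hcW hcw
        have hval : ∀ v, chiV (Sv v) c = if v = c then 1 else 0 := by
          intro v
          by_cases hvw : v = w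
          · subst hvw
            simp [hSv, chiV, hcW, (Ne.symm hcw : v ≠ c)]
          · by_cases hvW : v ∈ W
            · have hvc : v ≠ c := fun h => hcW (h ▸ hvW)
              simp [hSv, chiV, hvw, hvW, hcw, Ne.symm hvc, hvc]
            · simp only [hSv, if_neg hvw, if_neg hvW, chiV, Finset.mem_insert]
              by_cases hvc : v = c
              · simp [hvc]
              · simp [Ne.symm hvc, hcW, hvc]
        have := hE c
        rw [Finset.sum_congr rfl (fun v _ => by rw [hval v])] at this
        simpa [mul_ite] using this
      -- step 2: g b = - g w for b ∈ W
      have hb : ∀ b ∈ W, g b = - g w := by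
        intro b hbW
        have hbw : b ≠ w := fun h => hwW (h ▸ hbW)
        have hval : ∀ v, chiV (Sv v) b = if v ∈ W then (if v = b then 1 else 0) else 1 := by
          intro v
          by_cases hvw : v = w
          · subst hvw
            simp [hSv, chiV, hbW, hwW]
          · by_cases hvW : v ∈ W
            · by_cases hvb : v = b
              · subst hvb
                simp [hSv, chiV, hvw, hvW]
              · simp [hSv, chiV, hvw, hvW, hvb, hbw, Ne.symm hvb]
            · simp only [hSv, if_neg hvw, if_neg hvW, chiV, if_neg hvW]
              have : b ∈ insert v W := Finset.mem_insert_of_mem hbW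
              simp [this]
        have heq := hE b
        rw [Finset.sum_congr rfl (fun v _ => by rw [hval v])] at heq
        have hsplit : ∑ v, g v * (if v ∈ W then (if v = b then (1:ℝ) else 0) else 1)
            = (∑ v ∈ W, g v * (if v = b then (1:ℝ) else 0))
              + ∑ v ∈ Finset.univ \ W, g v := by
          rw [← Finset.sum_sdiff (Finset.subset_univ W)]
          rw [add_comm]
          congr 1
          · exact Finset.sum_congr rfl (fun v hv => by
              rw [if_pos hv])
          · refine Finset.sum_congr rfl (fun v hv => ?_)
            rw [Finset.mem_sdiff] at hv
            rw [if_neg hv.2, mul_one]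
        rw [hsplit] at heq
        have h1 : (∑ v ∈ W, g v * (if v = b then (1:ℝ) else 0)) = g b := by
          rw [Finset.sum_congr rfl (fun v _ => by rw [mul_ite, mul_one, mul_zero])]
          rw [Finset.sum_ite_eq' W b g, if_pos hbW]
        have h2 : (∑ v ∈ Finset.univ \ W, g v) = g w := by
          refine Finset.sum_eq_single_of_mem w (by simp [hwW]) ?_
          intro v hv hvw
          rw [Finset.mem_sdiff] at hv
          exact hc v hv.2 hvw
        rw [h1, h2] at heq
        linarith
      -- step 3: g w = 0
      have hw0 : g w = 0 := by
        have hval : ∀ v, chiV (Sv v) w = if v ∈ W then (1:ℝ) else 0 := by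
          intro v
          by_cases hvw : v = w
          · subst hvw
            simp [hSv, chiV, hwW]
          · by_cases hvW : v ∈ W
            · simp [hSv, chiV, hvw, hvW]
            · simp [hSv, chiV, hvw, hvW, Ne.symm hvw, hwW]
        have heq := hE w
        rw [Finset.sum_congr rfl (fun v _ => by rw [hval v])] at heq
        rw [Finset.sum_congr rfl (fun v _ => (mul_ite _ _ _ _).trans (by rw [mul_one, mul_zero]))]
          at heq
        rw [Fintype.sum_ite_mem] at heq
        rw [Finset.sum_congr rfl (fun v hv => hb v hv)] at heq
        rw [Finset.sum_const, nsmul_eq_mul] at heq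
        have hWcard : (W.card : ℝ) ≠ 0 := by
          simp [Finset.card_ne_zero_of_mem hne.choose_spec]
        have := mul_eq_zero.mp heq
        rcases this with h | h
        · exact absurd h hWcard
        · linarith
      intro v
      by_cases hvw : v = w
      · exact hvw ▸ hw0
      · by_cases hvW : v ∈ W
        · rw [hb v hvW, hw0, neg_zero]
        · exact hc v hvW hvw
    refine ⟨fun i => chiV (Sv ((Fintype.equivFin V).symm i)), ?_, ?_⟩
    · exact haff.comp_embedding (Fintype.equivFin V).symm.toEmbedding
    · intro i
      exact ⟨hmem _, htight _⟩


end
end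

section
/- Let G=(V,E) be a finite simple connected graph such that the co-2-plex polytope P(G) equals T(G). Then G contains no 2-plex of cardinality 4, and G contains no induced cycle of length ℓ ≥ 4 with ℓ not divisible by 3. -/
open Finset
open scoped Classical

noncomputable section

variable {V : Type*} [Fintype V]

/-- A vertex of a co-2-plex cannot have two distinct neighbors in it. -/
lemma co2plex_no_two_nbrs {G : SimpleGraph V} {S : Finset V} (hS : IsCo2Plex G S)
    {u a b : V} (hu : u ∈ S) (ha : a ∈ S) (hb : b ∈ S) (hab : a ≠ b)
    (h1 : G.Adj u a) (h2 : G.Adj u b) : False := by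
  have hsub : ({a, b} : Finset V) ⊆ S.filter (fun v => G.Adj u v) := by
    intro v hv
    rw [Finset.mem_insert, Finset.mem_singleton] at hv
    rcases hv with rfl | rfl <;> simp [Finset.mem_filter, ha, hb, h1, h2]
  have h2' : 2 ≤ (S.filter (fun v => G.Adj u v)).card := by
    have hcc := Finset.card_le_card hsub
    rwa [Finset.card_insert_of_notMem (by simpa using hab), Finset.card_singleton] at hcc
  have := hS u hu
  omega

/-- Valid inequalities of co-2-plex incidence vectors hold on the whole polytope. -/
lemma halfspace_bound {G : SimpleGraph V} (A : Finset V) (c : ℝ)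
    (hval : ∀ S : Finset V, IsCo2Plex G S → ((S ∩ A).card : ℝ) ≤ c)
    {x : V → ℝ} (hx : x ∈ co2PlexPolytope G) : ∑ v ∈ A, x v ≤ c := by
  have hconv : Convex ℝ {y : V → ℝ | ∑ v ∈ A, y v ≤ c} := by
    refine convex_halfSpace_le ?_ c
    exact ⟨fun a b => Finset.sum_add_distrib, fun r a => by
      simp only [Pi.smul_apply, smul_eq_mul]; rw [Finset.mul_sum]⟩
  have hsubset : {y : V → ℝ | ∃ S : Finset V, IsCo2Plex G S ∧ y = chiV S} ⊆
      {y : V → ℝ | ∑ v ∈ A, y v ≤ c} := by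
    rintro y ⟨S, hS, rfl⟩
    have hsum : ∑ v ∈ A, chiV S v = ((S ∩ A).card : ℝ) := by
      unfold chiV
      rw [Finset.sum_ite_mem, Finset.sum_const, nsmul_eq_mul, mul_one,
        Finset.inter_comm]
    simp only [Set.mem_setOf_eq, hsum]
    exact hval S hS
  exact convexHull_min hsubset hconv hx

/-- A scaled indicator vector lies in `TPoly G` under a neighborhood-degree condition. -/
lemma mem_TPoly_ind {G : SimpleGraph V} [DecidableRel G.Adj] (A : Finset V) (t : ℝ)
    (ht0 : 0 ≤ t) (ht1 : t ≤ 1) (d : ℕ)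
    (hd : ∀ w ∈ A, (G.neighborFinset w ∩ A).card ≤ d)
    (hkey : ∀ k : ℕ, 1 ≤ k → k ≤ d → t * (2 * (k : ℝ) - 1) ≤ (k : ℝ)) :
    (fun v => if v ∈ A then t else 0) ∈ TPoly G := by
  constructor
  · intro v; dsimp only; split <;> constructor <;> linarith
  · intro w W hW
    have hsum : ∑ v ∈ W, (if v ∈ A then t else 0) = ((W ∩ A).card : ℝ) * t := by
      rw [Finset.sum_ite_mem, Finset.sum_const, nsmul_eq_mul]
    have hkW : (W ∩ A).card ≤ W.card := Finset.card_le_card Finset.inter_subset_left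
    have hkWR : (((W ∩ A).card : ℝ)) ≤ (W.card : ℝ) := by exact_mod_cast hkW
    dsimp only
    rw [hsum]
    by_cases hwA : w ∈ A
    · rw [if_pos hwA]
      have hkd : (W ∩ A).card ≤ d := by
        refine le_trans (Finset.card_le_card ?_) (hd w hwA)
        intro v hv
        rw [Finset.mem_inter] at hv ⊢
        exact ⟨hW hv.1, hv.2⟩
      rcases Nat.eq_zero_or_pos (W ∩ A).card with hk0 | hk1
      · rw [hk0]
        rcases Nat.eq_zero_or_pos W.card with h0 | h1
        · rw [h0]; push_cast; nlinarith
        · have h1R : (1 : ℝ) ≤ (W.card : ℝ) := by exact_mod_cast h1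
          push_cast
          nlinarith [mul_nonneg (sub_nonneg.mpr ht1) (sub_nonneg.mpr h1R)]
      · have hkey' := hkey _ hk1 hkd
        nlinarith [mul_nonneg (sub_nonneg.mpr ht1) (sub_nonneg.mpr hkWR)]
    · rw [if_neg hwA]
      nlinarith [mul_nonneg (sub_nonneg.mpr ht1)
        (le_trans (Nat.cast_nonneg _) hkWR : (0:ℝ) ≤ (W.card : ℝ))]

/-- In a 2-plex of cardinality 4, a co-2-plex picks at most 2 vertices. -/
lemma two_plex_inter_card_le_two {G : SimpleGraph V} {K : Finset V} (hK : Is2Plex G K)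
    (hcard : K.card = 4) {S : Finset V} (hS : IsCo2Plex G S) : (S ∩ K).card ≤ 2 := by
  by_contra hc
  push_neg at hc
  obtain ⟨T, hTsub, hT3⟩ := Finset.exists_subset_card_eq (show 3 ≤ (S ∩ K).card from hc)
  obtain ⟨a, b, c, hab, hac, hbc, rfl⟩ := Finset.card_eq_three.mp hT3
  have haS : a ∈ S := (Finset.mem_inter.mp (hTsub (by simp))).1
  have hbS : b ∈ S := (Finset.mem_inter.mp (hTsub (by simp))).1
  have hcS : c ∈ S := (Finset.mem_inter.mp (hTsub (by simp))).1
  have haK : a ∈ K := (Finset.mem_inter.mp (hTsub (by simp))).2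
  have hbK : b ∈ K := (Finset.mem_inter.mp (hTsub (by simp))).2
  have hcK : c ∈ K := (Finset.mem_inter.mp (hTsub (by simp))).2
  -- no vertex of K has two non-neighbors among three distinct vertices of K
  have key : ∀ u x y : V, u ∈ K → x ∈ K → y ∈ K → u ≠ x → u ≠ y → x ≠ y →
      ¬ G.Adj u x → ¬ G.Adj u y → False := by
    intro u x y huK hxK hyK hux huy hxy h1 h2
    have hsub : K.filter (fun v => G.Adj u v) ⊆ ((K.erase u).erase x).erase y := by
      intro v hv
      rw [Finset.mem_filter] at hv
      rw [Finset.mem_erase, Finset.mem_erase, Finset.mem_erase]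
      exact ⟨fun hvy => h2 (hvy ▸ hv.2), fun hvx => h1 (hvx ▸ hv.2),
        fun hvu => G.loopless.irrefl u (hvu ▸ hv.2), hv.1⟩
    have hle := Finset.card_le_card hsub
    have e1 : (K.erase u).card = 3 := by rw [Finset.card_erase_of_mem huK, hcard]
    have e2 : ((K.erase u).erase x).card = 2 := by
      rw [Finset.card_erase_of_mem (Finset.mem_erase.mpr ⟨fun hh => hux hh.symm, hxK⟩), e1]
    have e3 : (((K.erase u).erase x).erase y).card = 1 := by
      rw [Finset.card_erase_of_mem (Finset.mem_erase.mpr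
        ⟨fun hh => hxy hh.symm, Finset.mem_erase.mpr ⟨fun hh => huy hh.symm, hyK⟩⟩), e2]
    have := hK u huK
    omega
  have hAa : G.Adj a b ∨ G.Adj a c := by
    by_contra hcon
    push_neg at hcon
    exact key a b c haK hbK hcK hab hac hbc hcon.1 hcon.2
  have hBb : G.Adj b a ∨ G.Adj b c := by
    by_contra hcon
    push_neg at hcon
    exact key b a c hbK haK hcK (Ne.symm hab) hbc hac hcon.1 hcon.2
  have hCc : G.Adj c a ∨ G.Adj c b := by
    by_contra hcon
    push_neg at hcon
    exact key c a b hcK haK hbK (Ne.symm hac) (Ne.symm hbc) hab hcon.1 hcon.2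
  rcases hAa with h1 | h1
  · rcases hCc with h2 | h2
    · exact co2plex_no_two_nbrs hS haS hbS hcS hbc h1 h2.symm
    · exact co2plex_no_two_nbrs hS hbS haS hcS hac h1.symm h2.symm
  · rcases hBb with h2 | h2
    · exact co2plex_no_two_nbrs hS haS hbS hcS hbc h2.symm h1
    · exact co2plex_no_two_nbrs hS hcS haS hbS hab h1.symm h2.symm


/-- A co-2-plex meets an induced cycle of length `m + 4` in at most `⌊2(m+4)/3⌋` vertices. -/
lemma cycle_inter_bound {G : SimpleGraph V} {m : ℕ}
    (f : SimpleGraph.cycleGraph (m + 4) ↪g G) {S : Finset V} (hS : IsCo2Plex G S) :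
    (S ∩ Finset.univ.image (fun i : Fin (m + 4) => f i)).card ≤ 2 * (m + 4) / 3 := by
  have hinj : Function.Injective (fun i : Fin (m + 4) => f i) := fun i j hij => f.injective hij
  set T : Finset (Fin (m + 4)) := Finset.univ.filter (fun i => f i ∈ S) with hTdef
  have hcardeq : (S ∩ Finset.univ.image (fun i : Fin (m + 4) => f i)).card = T.card := by
    have himg : S ∩ Finset.univ.image (fun i : Fin (m + 4) => f i)
        = T.image (fun i => f i) := by
      ext v
      simp only [Finset.mem_inter, Finset.mem_image, hTdef, Finset.mem_filter,
        Finset.mem_univ, true_and]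
      constructor
      · rintro ⟨hvS, i, rfl⟩; exact ⟨i, hvS, rfl⟩
      · rintro ⟨i, hi, rfl⟩; exact ⟨hi, i, rfl⟩
    rw [himg, Finset.card_image_of_injective _ hinj]
  have htri : ∀ i : Fin (m + 4), ¬(i ∈ T ∧ i + 1 ∈ T ∧ i + 1 + 1 ∈ T) := by
    rintro i ⟨h0, h1, h2⟩
    rw [hTdef, Finset.mem_filter] at h0 h1 h2
    have hne : f i ≠ f (i + 1 + 1) := by
      intro hfe
      have hii : i = i + (1 + 1) := by rw [← add_assoc]; exact hinj hfe
      have h20 : (1 + 1 : Fin (m + 4)) = 0 := left_eq_add.mp hii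
      have hval := congrArg Fin.val h20
      rw [Fin.val_add, Fin.val_one, Fin.val_zero, Nat.mod_eq_of_lt (by omega)] at hval
      omega
    have hadj1 : G.Adj (f (i + 1)) (f i) := by
      rw [f.map_adj_iff]
      rw [show (SimpleGraph.cycleGraph (m + 4)) = SimpleGraph.cycleGraph (m + 2 + 2) from rfl,
        SimpleGraph.cycleGraph_adj]
      left
      simp
    have hadj2 : G.Adj (f (i + 1)) (f (i + 1 + 1)) := by
      rw [f.map_adj_iff]
      rw [show (SimpleGraph.cycleGraph (m + 4)) = SimpleGraph.cycleGraph (m + 2 + 2) from rfl,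
        SimpleGraph.cycleGraph_adj]
      right
      simp
    exact co2plex_no_two_nbrs hS h1.2 h0.2 h2.2 hne hadj1 hadj2
  have hT1 : ∑ i : Fin (m + 4), (if i ∈ T then (1 : ℕ) else 0) = T.card := by
    rw [Finset.sum_ite_mem, Finset.univ_inter, Finset.sum_const, smul_eq_mul, mul_one]
  have e1 : ∑ i : Fin (m + 4), (if i + 1 ∈ T then (1 : ℕ) else 0)
      = ∑ i : Fin (m + 4), (if i ∈ T then (1 : ℕ) else 0) :=
    Fintype.sum_equiv (Equiv.addRight 1) _ _ (fun i => rfl)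
  have e2 : ∑ i : Fin (m + 4), (if i + 1 + 1 ∈ T then (1 : ℕ) else 0)
      = ∑ i : Fin (m + 4), (if i + 1 ∈ T then (1 : ℕ) else 0) :=
    Fintype.sum_equiv (Equiv.addRight 1) _ _ (fun i => rfl)
  have hcount : 3 * T.card ≤ 2 * (m + 4) := by
    calc 3 * T.card
        = ∑ i : Fin (m + 4), ((if i ∈ T then (1 : ℕ) else 0) + (if i + 1 ∈ T then 1 else 0)
            + (if i + 1 + 1 ∈ T then 1 else 0)) := by
          rw [Finset.sum_add_distrib, Finset.sum_add_distrib, e2, e1, hT1]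
          ring
      _ ≤ ∑ _i : Fin (m + 4), 2 := by
          refine Finset.sum_le_sum (fun i _ => ?_)
          by_cases h0 : i ∈ T <;> by_cases h1 : i + 1 ∈ T <;> by_cases h2 : i + 1 + 1 ∈ T <;>
            simp only [h0, h1, h2, if_true, if_false] <;>
            first
              | omega
              | exact absurd ⟨h0, h1, h2⟩ (htri i)
      _ = 2 * (m + 4) := by
          rw [Finset.sum_const, Finset.card_univ, Fintype.card_fin, smul_eq_mul]
          ring
  rw [hcardeq]
  omega

/-- If P(G) = T(G) for a connected graph G, then G contains no
2-plex of cardinality 4 and no induced cycle of length ℓ ≥ 4 with 3 ∤ ℓ. -/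
theorem stmt14 (G : SimpleGraph V) [DecidableRel G.Adj] (hconn : G.Connected)
    (h : co2PlexPolytope G = TPoly G) :
    (∀ K : Finset V, Is2Plex G K → K.card ≠ 4) ∧
    (∀ n : ℕ, 4 ≤ n → ¬ (3 ∣ n) → IsEmpty (SimpleGraph.cycleGraph n ↪g G)) := by
  constructor
  · intro K hK hKcard
    have hnbr : ∀ w ∈ K, (G.neighborFinset w ∩ K).card ≤ 3 := by
      intro w hw
      have hsub : G.neighborFinset w ∩ K ⊆ K.erase w := by
        intro v hv
        rw [Finset.mem_inter, SimpleGraph.mem_neighborFinset] at hv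
        refine Finset.mem_erase.mpr ⟨?_, hv.2⟩
        rintro rfl
        exact G.loopless.irrefl _ hv.1
      calc (G.neighborFinset w ∩ K).card ≤ (K.erase w).card := Finset.card_le_card hsub
        _ = 3 := by rw [Finset.card_erase_of_mem hw, hKcard]
    have hxT : (fun v => if v ∈ K then (3 / 5 : ℝ) else 0) ∈ TPoly G :=
      mem_TPoly_ind K (3 / 5) (by norm_num) (by norm_num) 3 hnbr
        (fun k hk1 hk3 => by interval_cases k <;> norm_num)
    rw [← h] at hxT
    have hb := halfspace_bound K 2
      (fun S hS => by exact_mod_cast two_plex_inter_card_le_two hK hKcard hS) hxT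
    have hsum : ∑ v ∈ K, (if v ∈ K then (3 / 5 : ℝ) else 0) = 12 / 5 := by
      rw [Finset.sum_ite_mem, Finset.inter_self, Finset.sum_const, hKcard, nsmul_eq_mul]
      norm_num
    rw [hsum] at hb
    norm_num at hb
  · intro n hn h3
    obtain ⟨m, rfl⟩ : ∃ m, n = m + 4 := ⟨n - 4, by omega⟩
    refine ⟨fun f => ?_⟩
    set A : Finset V := Finset.univ.image (fun i : Fin (m + 4) => f i) with hA
    have hinj : Function.Injective (fun i : Fin (m + 4) => f i) := fun i j hij => f.injective hij
    have hAcard : A.card = m + 4 := by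
      rw [hA, Finset.card_image_of_injective _ hinj, Finset.card_univ, Fintype.card_fin]
    have hnbr : ∀ w ∈ A, (G.neighborFinset w ∩ A).card ≤ 2 := by
      intro w hw
      rw [hA, Finset.mem_image] at hw
      obtain ⟨i, -, rfl⟩ := hw
      have hsub : G.neighborFinset (f i) ∩ A ⊆ {f (i - 1), f (i + 1)} := by
        intro v hv
        rw [Finset.mem_inter, SimpleGraph.mem_neighborFinset] at hv
        obtain ⟨hadj, hvA⟩ := hv
        rw [hA, Finset.mem_image] at hvA
        obtain ⟨j, -, rfl⟩ := hvA
        have hcyc : (SimpleGraph.cycleGraph (m + 2 + 2)).Adj i j := f.map_adj_iff.mp hadj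
        rw [SimpleGraph.cycleGraph_adj] at hcyc
        rw [Finset.mem_insert, Finset.mem_singleton]
        rcases hcyc with hc | hc
        · left
          congr 1
          calc j = i - (i - j) := (sub_sub_cancel i j).symm
            _ = i - 1 := by rw [hc]
        · right
          congr 1
          calc j = (j - i) + i := (sub_add_cancel j i).symm
            _ = 1 + i := by rw [hc]
            _ = i + 1 := add_comm 1 i
      calc (G.neighborFinset (f i) ∩ A).card
          ≤ ({f (i - 1), f (i + 1)} : Finset V).card := Finset.card_le_card hsub
        _ ≤ 2 := (Finset.card_insert_le _ _).trans (by simp)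
    have hxT : (fun v => if v ∈ A then (2 / 3 : ℝ) else 0) ∈ TPoly G :=
      mem_TPoly_ind A (2 / 3) (by norm_num) (by norm_num) 2 hnbr
        (fun k hk1 hk2 => by interval_cases k <;> norm_num)
    rw [← h] at hxT
    have hb := halfspace_bound A ((2 * (m + 4) / 3 : ℕ) : ℝ)
      (fun S hS => by rw [hA]; exact_mod_cast cycle_inter_bound f hS) hxT
    have hsum : ∑ v ∈ A, (if v ∈ A then (2 / 3 : ℝ) else 0) = (2 / 3 : ℝ) * ((m : ℝ) + 4) := by
      rw [Finset.sum_ite_mem, Finset.inter_self, Finset.sum_const, hAcard, nsmul_eq_mul]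
      push_cast
      ring
    rw [hsum] at hb
    have hq : 3 * (2 * (m + 4) / 3) < 2 * (m + 4) := by omega
    have hqR : (3 : ℝ) * ((2 * (m + 4) / 3 : ℕ) : ℝ) < 2 * ((m : ℝ) + 4) := by
      exact_mod_cast hq
    linarith

end
end

section
/- Let G=(V,E) be a finite simple graph and 𝒰 a set of utter cliques of G such that ⋃_{[W,F]∈𝒰} E(W) = E. Then a binary point (x,y) ∈ {0,1}^V × {0,1}^E is the extended incidence vector of a co-2-plex of G if and only if it satisfies x(W) + y(F ∩ E(V∖W)) − y(E(W)) ≤ 1 for every [W,F] ∈ 𝒰 and y(δ(v)) ≤ x_v for every v ∈ V. -/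
open Finset
open scoped Classical

noncomputable section

variable {V : Type*} [Fintype V]

set_option linter.unusedSectionVars false

private lemma sum_indicator {α : Type*} (T : Finset α) (p : α → Prop) [DecidablePred p] :
    (∑ e ∈ T, if p e then (1:ℝ) else 0) = ((T.filter p).card : ℝ) := by
  rw [← Finset.sum_filter, Finset.sum_const, nsmul_eq_mul, mul_one]

private lemma edge_repr (G : SimpleGraph V) (e : G.edgeSet) :
    ∃ a b, G.Adj a b ∧ (e : Sym2 V) = s(a, b) := by
  obtain ⟨e, he⟩ := e
  revert he
  induction e using Sym2.ind with
  | _ a b => intro he; exact ⟨a, b, G.mem_edgeSet.mp he, rfl⟩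

private lemma co2_no_two (G : SimpleGraph V) {S : Finset V} (hS : IsCo2Plex G S)
    {a b c : V} (ha : a ∈ S) (hb : b ∈ S) (hc : c ∈ S) (hbc : b ≠ c)
    (hab : G.Adj a b) (hac : G.Adj a c) : False := by
  have h1 := hS a ha
  have h2 : ({b, c} : Finset V) ⊆ S.filter fun v => G.Adj a v := by
    intro v hv
    rcases Finset.mem_insert.mp hv with rfl | hv
    · exact Finset.mem_filter.mpr ⟨hb, hab⟩
    · rw [Finset.mem_singleton] at hv; subst hv
      exact Finset.mem_filter.mpr ⟨hc, hac⟩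
  have h3 := Finset.card_le_card h2
  rw [Finset.card_pair hbc] at h3
  omega

private lemma shared_vertex_contra (G : SimpleGraph V) {S : Finset V} (hS : IsCo2Plex G S)
    {e f : G.edgeSet} (hef : e ≠ f)
    (heS : ∀ w ∈ (e : Sym2 V), w ∈ S) (hfS : ∀ w ∈ (f : Sym2 V), w ∈ S)
    {v : V} (hve : v ∈ (e : Sym2 V)) (hvf : v ∈ (f : Sym2 V)) : False := by
  have he' : s(v, Sym2.Mem.other' hve) = (e : Sym2 V) := Sym2.other_spec' hve
  have hf' : s(v, Sym2.Mem.other' hvf) = (f : Sym2 V) := Sym2.other_spec' hvf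
  have hadje : G.Adj v (Sym2.Mem.other' hve) := by
    rw [← G.mem_edgeSet, he']; exact e.2
  have hadjf : G.Adj v (Sym2.Mem.other' hvf) := by
    rw [← G.mem_edgeSet, hf']; exact f.2
  have hne : Sym2.Mem.other' hve ≠ Sym2.Mem.other' hvf := by
    intro h
    apply hef
    apply Subtype.ext
    rw [← he', ← hf', h]
  exact co2_no_two G hS (heS v hve) (heS _ (Sym2.other_mem' hve))
    (hfS _ (Sym2.other_mem' hvf)) hne hadje hadjf

private lemma two_S_edges_contra (G : SimpleGraph V) {S : Finset V} (hS : IsCo2Plex G S)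
    {e f : G.edgeSet} (hef : e ≠ f)
    (heS : ∀ w ∈ (e : Sym2 V), w ∈ S) (hfS : ∀ w ∈ (f : Sym2 V), w ∈ S)
    (hadj : (∃ v, v ∈ (e : Sym2 V) ∧ v ∈ (f : Sym2 V)) ∨
      ∃ a ∈ (e : Sym2 V), ∃ b ∈ (f : Sym2 V), G.Adj a b) : False := by
  rcases hadj with ⟨v, hv1, hv2⟩ | ⟨a, ha, b, hb, hab⟩
  · exact shared_vertex_contra G hS hef heS hfS hv1 hv2
  · by_cases hbe : b ∈ (e : Sym2 V)
    · exact shared_vertex_contra G hS hef heS hfS hbe hb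
    · have ha' : Sym2.Mem.other' ha ∈ (e : Sym2 V) := Sym2.other_mem' ha
      have hadja : G.Adj a (Sym2.Mem.other' ha) := by
        rw [← G.mem_edgeSet, Sym2.other_spec' ha]; exact e.2
      exact co2_no_two G hS (heS a ha) (heS _ ha') (hfS b hb)
        (fun h => hbe (h ▸ ha')) hadja hab

private lemma vertex_edge_contra (G : SimpleGraph V) {S : Finset V} (hS : IsCo2Plex G S)
    {u : V} (hu : u ∈ S) {f : G.edgeSet} (hfS : ∀ w ∈ (f : Sym2 V), w ∈ S)
    (huf : u ∉ (f : Sym2 V)) (h : ∃ z ∈ (f : Sym2 V), G.Adj u z) : False := by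
  obtain ⟨z, hz, hadj⟩ := h
  have hz' : Sym2.Mem.other' hz ∈ (f : Sym2 V) := Sym2.other_mem' hz
  have hadjz : G.Adj z (Sym2.Mem.other' hz) := by
    rw [← G.mem_edgeSet, Sym2.other_spec' hz]; exact f.2
  exact co2_no_two G hS (hfS z hz) (hfS _ hz') hu (fun h => huf (h ▸ hz')) hadjz hadj.symm


/-- If a family of utter cliques covers all edges (via the
edge sets of their vertex parts), then the associated inequalities together
with (8) characterize the binary extended incidence vectors of co-2-plexes. -/
theorem stmt16 (G : SimpleGraph V)
    (𝒰 : Set (Finset V × Finset G.edgeSet))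
    (hUC : ∀ p ∈ 𝒰, IsUtterClique G p.1 p.2)
    (hcover : ∀ e : G.edgeSet, ∃ p ∈ 𝒰, e ∈ edgesIn G p.1)
    (x : V → ℝ) (y : G.edgeSet → ℝ)
    (hx : ∀ v, x v = 0 ∨ x v = 1) (hy : ∀ e, y e = 0 ∨ y e = 1) :
    (∃ S : Finset V, IsCo2Plex G S ∧ x = chiV S ∧ y = chiE G S) ↔
      ((∀ p ∈ 𝒰,
          ∑ v ∈ p.1, x v + ∑ e ∈ p.2 ∩ edgesOut G p.1, y e
            - ∑ e ∈ edgesIn G p.1, y e ≤ 1) ∧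
        ∀ v : V, ∑ e ∈ inc G v, y e ≤ x v) := by
  constructor
  · rintro ⟨S, hS, rfl, rfl⟩
    have hsumE : ∀ T : Finset G.edgeSet, ∑ e ∈ T, chiE G S e =
        ((T.filter fun e : G.edgeSet => ∀ v ∈ (e : Sym2 V), v ∈ S).card : ℝ) := by
      intro T
      calc ∑ e ∈ T, chiE G S e
          = ∑ e ∈ T, if ∀ v ∈ (e : Sym2 V), v ∈ S then (1:ℝ) else 0 :=
            Finset.sum_congr rfl (fun e _ => by
              by_cases hc : ∀ v ∈ (e : Sym2 V), v ∈ S <;> simp [chiE, hc])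
        _ = _ := sum_indicator T (fun e : G.edgeSet => ∀ v ∈ (e : Sym2 V), v ∈ S)
    have hsumV : ∀ T : Finset V, ∑ v ∈ T, chiV S v =
        ((T.filter fun v => v ∈ S).card : ℝ) := by
      intro T
      unfold chiV
      convert sum_indicator T (fun v => v ∈ S) using 2
    constructor
    · intro p hp
      have hclq := hUC p hp
      have hW : ∀ a ∈ p.1, ∀ b ∈ p.1, a ≠ b → G.Adj a b := by
        intro a ha b hb hne
        exact hclq (Or.inl ⟨a, ha, rfl⟩) (Or.inl ⟨b, hb, rfl⟩) (by simp [hne])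
      have hWF : ∀ a ∈ p.1, ∀ f ∈ p.2,
          a ∈ (f : Sym2 V) ∨ ∃ z ∈ (f : Sym2 V), G.Adj a z := by
        intro a ha f hf
        exact hclq (Or.inl ⟨a, ha, rfl⟩) (Or.inr ⟨f, hf, rfl⟩) (by simp)
      have hFF : ∀ e ∈ p.2, ∀ f ∈ p.2, e ≠ f →
          ((∃ v, v ∈ (e : Sym2 V) ∧ v ∈ (f : Sym2 V)) ∨
            ∃ a ∈ (e : Sym2 V), ∃ b ∈ (f : Sym2 V), G.Adj a b) := by
        intro e he f hf hne
        exact (hclq (Or.inr ⟨e, he, rfl⟩) (Or.inr ⟨f, hf, rfl⟩) (by simp [hne])).2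
      set T := p.1.filter (fun v => v ∈ S) with hTdef
      set A := (edgesIn G p.1).filter (fun e : G.edgeSet => ∀ v ∈ (e : Sym2 V), v ∈ S) with hAdef
      set B := (p.2 ∩ edgesOut G p.1).filter (fun e : G.edgeSet => ∀ v ∈ (e : Sym2 V), v ∈ S)
        with hBdef
      have hT2 : T.card ≤ 2 := by
        by_contra h
        push_neg at h
        obtain ⟨a, ha, b, hb, c, hc, hab, hac, hbc⟩ := Finset.two_lt_card.mp h
        have ha' := Finset.mem_filter.mp ha
        have hb' := Finset.mem_filter.mp hb
        have hc' := Finset.mem_filter.mp hc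
        exact co2_no_two G hS ha'.2 hb'.2 hc'.2 hbc
          (hW a ha'.1 b hb'.1 hab) (hW a ha'.1 c hc'.1 hac)
      have hB1 : B.card ≤ 1 := by
        rw [Finset.card_le_one]
        intro e he f hf
        by_contra hne
        have he' := Finset.mem_filter.mp he
        have hf' := Finset.mem_filter.mp hf
        exact two_S_edges_contra G hS hne he'.2 hf'.2
          (hFF e (Finset.mem_inter.mp he'.1).1 f (Finset.mem_inter.mp hf'.1).1 hne)
      have hTB : 1 ≤ T.card → B.card = 0 := by
        intro h
        rw [Finset.card_eq_zero, Finset.eq_empty_iff_forall_notMem]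
        obtain ⟨u, hu⟩ := Finset.card_pos.mp h
        have hu' := Finset.mem_filter.mp hu
        intro f hf
        have hf' := Finset.mem_filter.mp hf
        have hfout : ∀ w ∈ (f : Sym2 V), w ∉ p.1 := by
          have := (Finset.mem_inter.mp hf'.1).2
          simpa [edgesOut] using this
        have huf : u ∉ (f : Sym2 V) := fun h => hfout u h hu'.1
        rcases hWF u hu'.1 f (Finset.mem_inter.mp hf'.1).1 with h1 | h1
        · exact huf h1
        · exact vertex_edge_contra G hS hu'.2 hf'.2 huf h1
      have hTA : T.card = 2 → 1 ≤ A.card := by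
        intro h
        obtain ⟨a, b, hab, hTab⟩ := Finset.card_eq_two.mp h
        have ha : a ∈ T := by rw [hTab]; simp
        have hb : b ∈ T := by rw [hTab]; simp
        have ha' := Finset.mem_filter.mp ha
        have hb' := Finset.mem_filter.mp hb
        have hadj : G.Adj a b := hW a ha'.1 b hb'.1 hab
        refine Finset.card_pos.mpr ⟨⟨s(a, b), G.mem_edgeSet.mpr hadj⟩, ?_⟩
        rw [hAdef, Finset.mem_filter]
        constructor
        · simp only [edgesIn, Finset.mem_filter, Finset.mem_univ, true_and]
          intro v hv
          rcases Sym2.mem_iff.mp hv with rfl | rfl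
          · exact ha'.1
          · exact hb'.1
        · intro v hv
          rcases Sym2.mem_iff.mp hv with rfl | rfl
          · exact ha'.2
          · exact hb'.2
      have key : T.card + B.card ≤ 1 + A.card := by
        rcases Nat.lt_or_ge T.card 1 with h | h
        · omega
        · have hb0 := hTB h
          rcases Nat.lt_or_ge T.card 2 with h2 | h2
          · omega
          · have he2 : T.card = 2 := by omega
            have := hTA he2
            omega
      rw [hsumV, hsumE, hsumE]
      have keyR : (T.card : ℝ) + B.card ≤ 1 + A.card := by exact_mod_cast key
      linarith
    · intro v
      rw [hsumE]
      by_cases hv : v ∈ S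
      · have h1 : ((inc G v).filter fun e : G.edgeSet => ∀ w ∈ (e : Sym2 V), w ∈ S).card ≤ 1 := by
          rw [Finset.card_le_one]
          intro e he f hf
          by_contra hne
          have he' := Finset.mem_filter.mp he
          have hf' := Finset.mem_filter.mp hf
          have hve : v ∈ (e : Sym2 V) := by
            have := he'.1; simpa [inc] using this
          have hvf : v ∈ (f : Sym2 V) := by
            have := hf'.1; simpa [inc] using this
          exact shared_vertex_contra G hS hne he'.2 hf'.2 hve hvf
        have h2 : chiV S v = 1 := by simp [chiV, hv]
        rw [h2]
        exact_mod_cast h1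
      · have h1 : ((inc G v).filter fun e : G.edgeSet => ∀ w ∈ (e : Sym2 V), w ∈ S) = ∅ := by
          rw [Finset.eq_empty_iff_forall_notMem]
          intro e he
          have he' := Finset.mem_filter.mp he
          have hve : v ∈ (e : Sym2 V) := by
            have := he'.1; simpa [inc] using this
          exact hv (he'.2 v hve)
        have h2 : chiV S v = 0 := by simp [chiV, hv]
        rw [h1, h2]
        simp
  · rintro ⟨hA, hB⟩
    set S := Finset.univ.filter (fun v => x v = 1) with hSdef
    have hmemS : ∀ v, v ∈ S ↔ x v = 1 := by
      intro v; simp [hSdef]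
    have hy0 : ∀ e, (0 : ℝ) ≤ y e := by
      intro e; rcases hy e with h | h <;> rw [h] <;> norm_num
    have hyi : ∀ e, y e = if y e = 1 then (1 : ℝ) else 0 := by
      intro e; rcases hy e with h | h <;> simp [h]
    have hxi : ∀ v, x v = if x v = 1 then (1 : ℝ) else 0 := by
      intro v; rcases hx v with h | h <;> simp [h]
    have hx1 : ∀ v, x v ≤ 1 := by
      intro v; rcases hx v with h | h <;> rw [h] <;> norm_num
    have K1 : ∀ (e : G.edgeSet) (v : V), v ∈ (e : Sym2 V) → y e = 1 → x v = 1 := by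
      intro e v hve hye
      have hmem : e ∈ inc G v := by simp [inc, hve]
      have hle : y e ≤ ∑ f ∈ inc G v, y f :=
        Finset.single_le_sum (fun f _ => hy0 f) hmem
      have h2 := hB v
      rcases hx v with h | h
      · rw [h] at h2; rw [hye] at hle; linarith
      · exact h
    have K2 : ∀ v, ((inc G v).filter fun e => y e = 1).card ≤ 1 := by
      intro v
      have hsum : ∑ e ∈ inc G v, y e =
          (((inc G v).filter fun e => y e = 1).card : ℝ) := by
        calc ∑ e ∈ inc G v, y e = ∑ e ∈ inc G v, if y e = 1 then (1:ℝ) else 0 :=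
              Finset.sum_congr rfl (fun e _ => hyi e)
          _ = _ := sum_indicator _ _
      have h2 := (hB v).trans (hx1 v)
      rw [hsum] at h2
      exact_mod_cast h2
    have K3 : ∀ e : G.edgeSet, (∀ v ∈ (e : Sym2 V), x v = 1) → y e = 1 := by
      intro e heS
      obtain ⟨a, b, hab, habe⟩ := edge_repr G e
      have hamem : a ∈ (e : Sym2 V) := by rw [habe]; exact Sym2.mem_mk_left a b
      have hbmem : b ∈ (e : Sym2 V) := by rw [habe]; exact Sym2.mem_mk_right a b
      have hxa : x a = 1 := heS a hamem
      have hxb : x b = 1 := heS b hbmem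
      obtain ⟨p, hp, hpe⟩ := hcover e
      have hpe' : ∀ v ∈ (e : Sym2 V), v ∈ p.1 := by
        simpa [edgesIn] using hpe
      set T := p.1.filter (fun v => x v = 1) with hTdef
      set A := (edgesIn G p.1).filter (fun f => y f = 1) with hAdef
      have hcon := hA p hp
      have hs1 : ∑ v ∈ p.1, x v = (T.card : ℝ) := by
        calc ∑ v ∈ p.1, x v = ∑ v ∈ p.1, if x v = 1 then (1:ℝ) else 0 :=
              Finset.sum_congr rfl (fun v _ => hxi v)
          _ = _ := sum_indicator _ _
      have hs2 : ∑ f ∈ edgesIn G p.1, y f = (A.card : ℝ) := by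
        calc ∑ f ∈ edgesIn G p.1, y f
            = ∑ f ∈ edgesIn G p.1, if y f = 1 then (1:ℝ) else 0 :=
              Finset.sum_congr rfl (fun f _ => hyi f)
          _ = _ := sum_indicator _ _
      have hs3 : (0:ℝ) ≤ ∑ f ∈ p.2 ∩ edgesOut G p.1, y f :=
        Finset.sum_nonneg (fun f _ => hy0 f)
      have hTAn : T.card ≤ 1 + A.card := by
        have : (T.card : ℝ) ≤ 1 + A.card := by
          rw [hs1, hs2] at hcon; linarith
        exact_mod_cast this
      have hmatch : 2 * A.card ≤ T.card := by
        set t : G.edgeSet → Finset V :=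
          fun f => Finset.univ.filter (fun v => v ∈ (f : Sym2 V)) with htdef
        have htcard : ∀ f : G.edgeSet, (t f).card = 2 := by
          intro f
          obtain ⟨c, d, hcd, hcde⟩ := edge_repr G f
          have : t f = {c, d} := by
            ext v
            simp [htdef, hcde, Sym2.mem_iff]
          rw [this, Finset.card_pair hcd.ne]
        have hdisj : ∀ f1 ∈ A, ∀ f2 ∈ A, f1 ≠ f2 → Disjoint (t f1) (t f2) := by
          intro f1 hf1 f2 hf2 hne
          rw [Finset.disjoint_left]
          intro v hv1 hv2
          simp only [htdef, Finset.mem_filter, Finset.mem_univ, true_and] at hv1 hv2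
          have h1 : f1 ∈ (inc G v).filter (fun e => y e = 1) := by
            rw [Finset.mem_filter]
            exact ⟨by simp [inc, hv1], (Finset.mem_filter.mp hf1).2⟩
          have h2 : f2 ∈ (inc G v).filter (fun e => y e = 1) := by
            rw [Finset.mem_filter]
            exact ⟨by simp [inc, hv2], (Finset.mem_filter.mp hf2).2⟩
          have hlt : 1 < ((inc G v).filter fun e => y e = 1).card :=
            Finset.one_lt_card.mpr ⟨f1, h1, f2, h2, hne⟩
          have := K2 v
          omega
        have hsub : A.biUnion t ⊆ T := by
          intro v hv
          obtain ⟨f, hf, hvf⟩ := Finset.mem_biUnion.mp hv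
          simp only [htdef, Finset.mem_filter, Finset.mem_univ, true_and] at hvf
          have hf' := Finset.mem_filter.mp hf
          have hin : ∀ w ∈ (f : Sym2 V), w ∈ p.1 := by
            simpa [edgesIn] using hf'.1
          exact Finset.mem_filter.mpr ⟨hin v hvf, K1 f v hvf hf'.2⟩
        calc 2 * A.card = ∑ f ∈ A, (t f).card := by
              rw [Finset.sum_congr rfl (fun f _ => htcard f), Finset.sum_const,
                smul_eq_mul, Nat.mul_comm]
          _ = (A.biUnion t).card := (Finset.card_biUnion hdisj).symm
          _ ≤ T.card := Finset.card_le_card hsub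
      have habT : ({a, b} : Finset V) ⊆ T := by
        intro v hv
        rcases Finset.mem_insert.mp hv with rfl | hv
        · exact Finset.mem_filter.mpr ⟨hpe' v hamem, hxa⟩
        · rw [Finset.mem_singleton] at hv; subst hv
          exact Finset.mem_filter.mpr ⟨hpe' v hbmem, hxb⟩
      have h2T : 2 ≤ T.card := by
        rw [← Finset.card_pair hab.ne]
        exact Finset.card_le_card habT
      have hTeq : ({a, b} : Finset V) = T :=
        Finset.eq_of_subset_of_card_le habT (by rw [Finset.card_pair hab.ne]; omega)
      obtain ⟨f, hf⟩ := Finset.card_pos.mp (show 0 < A.card by omega)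
      have hf' := Finset.mem_filter.mp hf
      have hfy : y f = 1 := hf'.2
      have hfin : ∀ w ∈ (f : Sym2 V), w ∈ p.1 := by
        simpa [edgesIn] using hf'.1
      have hfT : ∀ w ∈ (f : Sym2 V), w ∈ ({a, b} : Finset V) := by
        intro w hw
        rw [hTeq]
        exact Finset.mem_filter.mpr ⟨hfin w hw, K1 f w hw hfy⟩
      obtain ⟨c, d, hcd, hcde⟩ := edge_repr G f
      have hc := hfT c (by rw [hcde]; exact Sym2.mem_mk_left c d)
      have hd := hfT d (by rw [hcde]; exact Sym2.mem_mk_right c d)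
      have hcd' : c ≠ d := hcd.ne
      have hfe : f = e := by
        apply Subtype.ext
        rw [hcde, habe]
        simp only [Finset.mem_insert, Finset.mem_singleton] at hc hd
        rcases hc with rfl | rfl <;> rcases hd with rfl | rfl
        · exact absurd rfl hcd'
        · rfl
        · exact Sym2.eq_swap
        · exact absurd rfl hcd'
      rw [← hfe]
      exact hfy
    have hSco : IsCo2Plex G S := by
      intro u hu
      by_contra h
      push_neg at h
      obtain ⟨b, hb, c, hc, hbc⟩ := Finset.one_lt_card.mp h
      have hb' := Finset.mem_filter.mp hb
      have hc' := Finset.mem_filter.mp hc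
      have hxu : x u = 1 := (hmemS u).mp hu
      have hxb : x b = 1 := (hmemS b).mp hb'.1
      have hxc : x c = 1 := (hmemS c).mp hc'.1
      set e1 : G.edgeSet := ⟨s(u, b), G.mem_edgeSet.mpr hb'.2⟩ with he1
      set e2 : G.edgeSet := ⟨s(u, c), G.mem_edgeSet.mpr hc'.2⟩ with he2
      have hy1 : y e1 = 1 := by
        apply K3
        intro v hv
        rcases Sym2.mem_iff.mp hv with rfl | rfl
        · exact hxu
        · exact hxb
      have hy2 : y e2 = 1 := by
        apply K3
        intro v hv
        rcases Sym2.mem_iff.mp hv with rfl | rfl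
        · exact hxu
        · exact hxc
      have hne : e1 ≠ e2 := by
        intro h
        exact hbc (Sym2.congr_right.mp (congrArg Subtype.val h))
      have h1 : e1 ∈ (inc G u).filter (fun e => y e = 1) := by
        rw [Finset.mem_filter]
        refine ⟨?_, hy1⟩
        simp [inc, he1]
      have h2 : e2 ∈ (inc G u).filter (fun e => y e = 1) := by
        rw [Finset.mem_filter]
        refine ⟨?_, hy2⟩
        simp [inc, he2]
      have hlt : 1 < ((inc G u).filter fun e => y e = 1).card :=
        Finset.one_lt_card.mpr ⟨e1, h1, e2, h2, hne⟩
      have := K2 u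
      omega
    refine ⟨S, hSco, ?_, ?_⟩
    · funext v
      rcases hx v with h | h
      · have : v ∉ S := fun hv => by rw [(hmemS v).mp hv] at h; norm_num at h
        simp [chiV, this, h]
      · have : v ∈ S := (hmemS v).mpr h
        simp [chiV, this, h]
    · funext e
      by_cases h : ∀ v ∈ (e : Sym2 V), v ∈ S
      · have : chiE G S e = 1 := by unfold chiE; rw [if_pos h]
        rw [this]
        exact K3 e (fun v hv => (hmemS v).mp (h v hv))
      · have h1 : chiE G S e = 0 := by simp only [chiE, if_neg h]
        rw [h1]
        rcases hy e with h2 | h2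
        · exact h2
        · exfalso
          apply h
          intro v hv
          exact (hmemS v).mpr (K1 e v hv h2)


end
end
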